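/- arXiv:1509.00231 — 2 statements merged into one kernel-verified Lean document; each statement's English description precedes it below -/
import Mathlib

section
/- (Markovian structure of discounted BSDE solutions) Let α > 0, let X be a Markov chain with transition matrices A_t, and let f be a Markovian driver, f(ω,t,z) = f̃(X_t(ω),t,z), independent of y, which is Lipschitz in z, satisfies the comparison condition of the change-of-measure proposition, and has |f(ω,t,0)| uniformly bounded. Let (Y,Z) be the unique bounded adapted solution of the discounted BSDE Y_T = Y_t − Σ_{t≤u<T}(f(ω,u,Z_u) − αY_u) + Σ_{t≤u<T} Z_uᵀM_{u+1} (for all 0 ≤ t < T). Then there exists a deterministic function v : ℕ × S → ℝ such that for all t, Y_t = v(t,X_t) a.s. and Z_t may be chosen (within its ∼_{M_{t+1}}-class) with e_kᵀZ_t = v(t+1,e_k) for all e_k ∈ S. Moreover, writing v_{t+1} ∈ ℝ^N for the vector with entries e_kᵀv_{t+1} = v(t+1,e_k), one has (1+α)v(t,e_k) − f̃(e_k,t,v_{t+1}) − v_{t+1}ᵀA_te_k = 0 for all t and all e_k ∈ S with P(X_t = e_k) > 0. -/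
open MeasureTheory Finset Filter

noncomputable section

namespace DiscreteEBSDE

variable {Ω : Type*} {mΩ : MeasurableSpace Ω} {N : ℕ}

/-- The standard basis vector `e i` of `ℝ^N`. -/
def e (N : ℕ) (i : Fin N) : Fin N → ℝ := Pi.single i 1

/-- The Euclidean inner product on `ℝ^N`. -/
def dotR {N : ℕ} (z w : Fin N → ℝ) : ℝ := ∑ i, z i * w i

/-- The process `X` takes values in the standard basis of `ℝ^N`. -/
def BasisValued (X : ℕ → Ω → (Fin N → ℝ)) : Prop := ∀ t ω, ∃ i, X t ω = e N i

/-- The σ-algebra generated by `X 0, …, X t`. -/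
def natSigma (X : ℕ → Ω → (Fin N → ℝ)) (t : ℕ) : MeasurableSpace Ω :=
  ⨆ s ∈ Set.Iic t, MeasurableSpace.comap (X s) inferInstance

/-- `F` is the `P`-completion of the natural filtration of `X`:
a set is `F t`-measurable iff it agrees with a set of the natural σ-algebra up to a
`P`-null symmetric difference. -/
def IsCompletedNaturalFiltration (P : Measure Ω) (X : ℕ → Ω → (Fin N → ℝ))
    (F : Filtration ℕ mΩ) : Prop :=
  ∀ (t : ℕ) (A : Set Ω), MeasurableSet[F t] A ↔
    ∃ B : Set Ω, MeasurableSet[natSigma X t] B ∧ P (symmDiff A B) = 0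

/-- The martingale difference `M (t+1) = X (t+1) - E[X (t+1) | F t]` (componentwise). -/
def Mdiff (P : Measure Ω) (F : Filtration ℕ mΩ) (X : ℕ → Ω → (Fin N → ℝ)) (t : ℕ)
    (ω : Ω) : Fin N → ℝ :=
  fun i => X (t + 1) ω i - (P[(fun ω' => X (t + 1) ω' i)|F t]) ω

/-- The conditional second moment `‖Z‖²_{M_{t+1}} = E[(Zᵀ M_{t+1})² | F t]`. -/
def seminormSq (P : Measure Ω) (F : Filtration ℕ mΩ) (X : ℕ → Ω → (Fin N → ℝ))
    (t : ℕ) (Z : Ω → Fin N → ℝ) : Ω → ℝ :=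
  P[(fun ω => (dotR (Z ω) (Mdiff P F X t ω)) ^ 2)|F t]

/-- The stochastic seminorm `‖Z‖_{M_{t+1}}`. -/
def mSeminorm (P : Measure Ω) (F : Filtration ℕ mΩ) (X : ℕ → Ω → (Fin N → ℝ))
    (t : ℕ) (Z : Ω → Fin N → ℝ) (ω : Ω) : ℝ :=
  Real.sqrt (seminormSq P F X t Z ω)

/-- `Z ∼_{M_{t+1}} Z'`, i.e. `‖Z - Z'‖_{M_{t+1}} = 0` a.s. -/
def equivMt (P : Measure Ω) (F : Filtration ℕ mΩ) (X : ℕ → Ω → (Fin N → ℝ)) (t : ℕ)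
    (Z Z' : Ω → Fin N → ℝ) : Prop :=
  seminormSq P F X t (fun ω => Z ω - Z' ω) =ᵐ[P] 0

/-- `Z ∼_M Z'`. -/
def equivM (P : Measure Ω) (F : Filtration ℕ mΩ) (X : ℕ → Ω → (Fin N → ℝ))
    (Z Z' : ℕ → Ω → Fin N → ℝ) : Prop :=
  ∀ t, equivMt P F X t (Z t) (Z' t)

/-- A driver `f(ω,t,y,z)` is adapted if `(ω,y,z) ↦ f(ω,t,y,z)` is
`F t ⊗ B(ℝ) ⊗ B(ℝ^N)`-measurable for every `t`. -/
def DriverAdapted (F : Filtration ℕ mΩ) (f : Ω → ℕ → ℝ → (Fin N → ℝ) → ℝ) : Prop :=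
  ∀ t : ℕ, Measurable[(F t).prod inferInstance]
    fun p : Ω × (ℝ × (Fin N → ℝ)) => f p.1 t p.2.1 p.2.2

/-- A column-stochastic transition matrix. -/
def IsTransMat {n : ℕ} (A : Matrix (Fin n) (Fin n) ℝ) : Prop :=
  (∀ i j, 0 ≤ A i j) ∧ ∀ j, ∑ i, A i j = 1

/-- `X` is a Markov chain with transition matrices `A t`; since `X` is valued in the
standard basis this is equivalent to `E[X (t+1) | F t] = (A t) (X t)` a.s. -/
def IsMarkovChain (P : Measure Ω) (F : Filtration ℕ mΩ) (X : ℕ → Ω → (Fin N → ℝ))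
    (A : ℕ → Matrix (Fin N) (Fin N) ℝ) : Prop :=
  (∀ t, IsTransMat (A t)) ∧
    ∀ (t : ℕ) (i : Fin N),
      (P[(fun ω => X (t + 1) ω i)|F t]) =ᵐ[P] fun ω => (A t).mulVec (X t ω) i

/-- The atom of `F t` containing `ω₀` (the set of paths agreeing with `ω₀` up to time `t`). -/
def pathAtom (X : ℕ → Ω → (Fin N → ℝ)) (t : ℕ) (ω₀ : Ω) : Set Ω :=
  {ω' | ∀ s ≤ t, X s ω' = X s ω₀}

/-- `min_{i ∈ J_t^F} (z - z')ᵀ(e_i - E[X_{t+1} | F_t])` where `F` is the atom of `ω₀`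
 at time `t` and `J_t^F = {i : P(X_{t+1} = e_i | F) > 0}`. -/
def minJump (P : Measure Ω) (F : Filtration ℕ mΩ) (X : ℕ → Ω → (Fin N → ℝ))
    (t : ℕ) (ω₀ : Ω) (z z' : Fin N → ℝ) (ω : Ω) : ℝ :=
  sInf {r : ℝ | ∃ i : Fin N,
    0 < P ({ω' | X (t + 1) ω' = e N i} ∩ pathAtom X t ω₀) ∧
    r = dotR (z - z') (fun j => e N i j - (P[(fun ω'' => X (t + 1) ω'' j)|F t]) ω)}

/-- The comparison condition of the change-of-measure proposition: on every atom `F` of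
`F t`, `f(ω,t,y,z) - f(ω,t,y,z') > min_{i ∈ J_t^F}{(z-z')ᵀ(e_i - E[X_{t+1}|F_t])}`, unless
this minimum is `0`, in which case equality holds. -/
def ComparisonCondition (P : Measure Ω) (F : Filtration ℕ mΩ) (X : ℕ → Ω → (Fin N → ℝ))
    (f : Ω → ℕ → ℝ → (Fin N → ℝ) → ℝ) : Prop :=
  ∀ (t : ℕ) (y : ℝ) (z z' : Fin N → ℝ) (ω₀ : Ω), 0 < P (pathAtom X t ω₀) →
    ∀ᵐ ω ∂P, ω ∈ pathAtom X t ω₀ →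
      (minJump P F X t ω₀ z z' ω = 0 → f ω t y z - f ω t y z' = 0) ∧
      (minJump P F X t ω₀ z z' ω ≠ 0 →
        minJump P F X t ω₀ z z' ω < f ω t y z - f ω t y z')

/-- `f` is Lipschitz in `z` with constant `L`, w.r.t. the stochastic seminorm. -/
def DriverLipschitzNoY (P : Measure Ω) (F : Filtration ℕ mΩ) (X : ℕ → Ω → (Fin N → ℝ))
    (L : ℝ) (f : Ω → ℕ → (Fin N → ℝ) → ℝ) : Prop :=
  ∀ (t : ℕ) (Zt Z't : Ω → Fin N → ℝ),
    StronglyMeasurable[F t] Zt → StronglyMeasurable[F t] Z't →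
    ∀ᵐ ω ∂P, |f ω t (Zt ω) - f ω t (Z't ω)| ≤
      L * mSeminorm P F X t (fun ω' => Zt ω' - Z't ω') ω

/-- `(Y,Z)` is an adapted solution of the finite horizon BSDE with driver `f`,
horizon `T` and terminal condition `ξ`. -/
def SolvesFiniteBSDE (P : Measure Ω) (F : Filtration ℕ mΩ) (X : ℕ → Ω → (Fin N → ℝ))
    (f : Ω → ℕ → ℝ → (Fin N → ℝ) → ℝ) (T : ℕ) (ξ : Ω → ℝ)
    (Y : ℕ → Ω → ℝ) (Z : ℕ → Ω → Fin N → ℝ) : Prop :=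
  Adapted F Y ∧ Adapted F Z ∧
    ∀ t ≤ T, ∀ᵐ ω ∂P,
      Y t ω - ∑ u ∈ Finset.Ico t T, f ω u (Y u ω) (Z u ω) +
        ∑ u ∈ Finset.Ico t T, dotR (Z u ω) (Mdiff P F X u ω) = ξ ω

/-- `(Y,Z)` is an adapted solution of the infinite-horizon discounted BSDE
with discount rate `α` and driver `f` (independent of `y`). -/
def SolvesDiscountedBSDE (P : Measure Ω) (F : Filtration ℕ mΩ) (X : ℕ → Ω → (Fin N → ℝ))
    (α : ℝ) (f : Ω → ℕ → (Fin N → ℝ) → ℝ)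
    (Y : ℕ → Ω → ℝ) (Z : ℕ → Ω → Fin N → ℝ) : Prop :=
  Adapted F Y ∧ Adapted F Z ∧
    ∀ t T : ℕ, t < T → ∀ᵐ ω ∂P,
      Y T ω = Y t ω - ∑ u ∈ Finset.Ico t T, (f ω u (Z u ω) - α * Y u ω) +
        ∑ u ∈ Finset.Ico t T, dotR (Z u ω) (Mdiff P F X u ω)

/-- `(Y,Z,lam)` solves the Ergodic BSDE with Markovian driver `f`. -/
def SolvesEBSDE (P : Measure Ω) (F : Filtration ℕ mΩ) (X : ℕ → Ω → (Fin N → ℝ))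
    (f : (Fin N → ℝ) → (Fin N → ℝ) → ℝ) (Y : ℕ → Ω → ℝ) (Z : ℕ → Ω → Fin N → ℝ)
    (lam : ℝ) : Prop :=
  ∀ t T : ℕ, t < T → ∀ᵐ ω ∂P,
    Y T ω = Y t ω - ∑ u ∈ Finset.Ico t T, (f (X u ω) (Z u ω) - lam) +
      ∑ u ∈ Finset.Ico t T, dotR (Z u ω) (Mdiff P F X u ω)

/-- Ratio with the convention `0/0 := 1`. -/
def balRatio (a b : ℝ) : ℝ := if a = 0 ∧ b = 0 then 1 else a / b

/-- The driver `f(ω,t,y,z)` is `γ`-balanced. -/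
def IsGammaBalanced (P : Measure Ω) (F : Filtration ℕ mΩ) (X : ℕ → Ω → (Fin N → ℝ))
    (A : ℕ → Matrix (Fin N) (Fin N) ℝ) (γ : ℝ)
    (f : Ω → ℕ → ℝ → (Fin N → ℝ) → ℝ) : Prop :=
  ∃ ψ : Ω → ℕ → (Fin N → ℝ) → (Fin N → ℝ) → (Fin N → ℝ),
    (∀ t : ℕ, Measurable[(F t).prod inferInstance]
      fun p : Ω × ((Fin N → ℝ) × (Fin N → ℝ)) => ψ p.1 t p.2.1 p.2.2) ∧
    ∀ (t : ℕ) (y : ℝ) (z z' : Fin N → ℝ), ∀ᵐ ω ∂P,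
      f ω t y z - f ω t y z' =
          dotR (z - z') (fun i => ψ ω t z z' i - (A t).mulVec (X t ω) i) ∧
        (∀ i, balRatio (ψ ω t z z' i) ((A t).mulVec (X t ω) i) ∈ Set.Icc γ γ⁻¹) ∧
        ∑ i, ψ ω t z z' i = 1

/-- The driver `f(ω,t,z)` (independent of `y`) is `γ`-balanced. -/
def IsGammaBalancedNoY (P : Measure Ω) (F : Filtration ℕ mΩ) (X : ℕ → Ω → (Fin N → ℝ))
    (A : ℕ → Matrix (Fin N) (Fin N) ℝ) (γ : ℝ)
    (f : Ω → ℕ → (Fin N → ℝ) → ℝ) : Prop :=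
  ∃ ψ : Ω → ℕ → (Fin N → ℝ) → (Fin N → ℝ) → (Fin N → ℝ),
    (∀ t : ℕ, Measurable[(F t).prod inferInstance]
      fun p : Ω × ((Fin N → ℝ) × (Fin N → ℝ)) => ψ p.1 t p.2.1 p.2.2) ∧
    ∀ (t : ℕ) (z z' : Fin N → ℝ), ∀ᵐ ω ∂P,
      f ω t z - f ω t z' =
          dotR (z - z') (fun i => ψ ω t z z' i - (A t).mulVec (X t ω) i) ∧
        (∀ i, balRatio (ψ ω t z z' i) ((A t).mulVec (X t ω) i) ∈ Set.Icc γ γ⁻¹) ∧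
        ∑ i, ψ ω t z z' i = 1

/-- A probability vector on `Fin n`. -/
def IsProbVec {n : ℕ} (μ : Fin n → ℝ) : Prop := (∀ i, 0 ≤ μ i) ∧ ∑ i, μ i = 1

/-- Total variation distance between (signed) measures on a finite state space. -/
def tvDist {n : ℕ} (μ ν : Fin n → ℝ) : ℝ := (∑ x, |μ x - ν x|) / 2

/-- Uniform ergodicity of the chain induced by the column-stochastic matrix `A`. -/
def UniformlyErgodic {n : ℕ} (A : Matrix (Fin n) (Fin n) ℝ) : Prop :=
  ∃ π : Fin n → ℝ, IsProbVec π ∧ ∃ R ρ : ℝ, 0 < R ∧ 0 < ρ ∧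
    ∀ (t : ℕ) (μ : Fin n → ℝ), IsProbVec μ →
      tvDist ((A ^ t).mulVec μ) π ≤ R * Real.exp (-ρ * t)

section Aux

open Classical in
lemma e_inj {N : ℕ} {i j : Fin N} (h : e N i = e N j) : i = j := by
  by_contra hne
  have h1 := congrFun h i
  rw [e, e, Pi.single_eq_same, Pi.single_eq_of_ne hne] at h1
  exact one_ne_zero h1

lemma dotR_e_right {N : ℕ} (z : Fin N → ℝ) (k : Fin N) : dotR z (e N k) = z k := by
  simp [dotR, e, Pi.single_apply, mul_ite]

lemma dotR_e_left {N : ℕ} (z : Fin N → ℝ) (k : Fin N) : dotR (e N k) z = z k := by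
  simp [dotR, e, Pi.single_apply, ite_mul]

variable {Ω : Type*} {mΩ : MeasurableSpace Ω} {N : ℕ}

lemma natSigma_le {P : Measure Ω} {X : ℕ → Ω → (Fin N → ℝ)} {F : Filtration ℕ mΩ}
    (hF : IsCompletedNaturalFiltration P X F) (t : ℕ) :
    natSigma X t ≤ F t := by
  intro A hA
  exact (hF t A).2 ⟨A, hA, by simp⟩

lemma measurable_X_of_le {P : Measure Ω} {X : ℕ → Ω → (Fin N → ℝ)} {F : Filtration ℕ mΩ}
    (hF : IsCompletedNaturalFiltration P X F) {s t : ℕ} (hst : s ≤ t) :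
    Measurable[F t] (X s) := by
  have h1 : MeasurableSpace.comap (X s) inferInstance ≤ natSigma X t := by
    exact le_biSup (fun s => MeasurableSpace.comap (X s) inferInstance) hst
  intro S hS
  exact natSigma_le hF t _ (h1 _ ⟨S, hS, rfl⟩)

lemma measurable_X {P : Measure Ω} {X : ℕ → Ω → (Fin N → ℝ)} {F : Filtration ℕ mΩ}
    (hF : IsCompletedNaturalFiltration P X F) (s : ℕ) :
    Measurable (X s) :=
  fun S hS => (F.le s) _ (measurable_X_of_le hF le_rfl hS)

lemma pathAtom_measurableSet {P : Measure Ω} {X : ℕ → Ω → (Fin N → ℝ)} {F : Filtration ℕ mΩ}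
    (hF : IsCompletedNaturalFiltration P X F) (t : ℕ) (ω₀ : Ω) :
    MeasurableSet[F t] (pathAtom X t ω₀) := by
  have : pathAtom X t ω₀ = ⋂ (s : ℕ) (_ : s ≤ t), (X s) ⁻¹' {X s ω₀} := by
    ext ω'; simp [pathAtom, Set.mem_iInter]
  rw [this]
  exact MeasurableSet.iInter fun s => MeasurableSet.iInter fun hs =>
    (measurable_X_of_le hF hs) (measurableSet_singleton _)

lemma mem_pathAtom_self (X : ℕ → Ω → (Fin N → ℝ)) (t : ℕ) (ω₀ : Ω) :
    ω₀ ∈ pathAtom X t ω₀ := fun _ _ => rfl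

lemma pathAtom_congr {X : ℕ → Ω → (Fin N → ℝ)} {t : ℕ} {ω₀ ω₁ : Ω}
    (h : ω₁ ∈ pathAtom X t ω₀) : pathAtom X t ω₁ = pathAtom X t ω₀ := by
  ext ω'
  constructor <;> intro hm s hs
  · exact (hm s hs).trans (h s hs)
  · exact (hm s hs).trans (h s hs).symm

end Aux
section Aux2
variable {Ω : Type*} {mΩ : MeasurableSpace Ω} {N : ℕ}

lemma saturated_of_natSigma {X : ℕ → Ω → (Fin N → ℝ)} {t : ℕ} {B : Set Ω}
    (hB : MeasurableSet[natSigma X t] B) : ∀ ω₁ ∈ B, pathAtom X t ω₁ ⊆ B := by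
  let m' : MeasurableSpace Ω :=
    { MeasurableSet' := fun S => ∀ ω₁ ∈ S, pathAtom X t ω₁ ⊆ S
      measurableSet_empty := fun ω₁ h => absurd h (Set.notMem_empty ω₁)
      measurableSet_compl := by
        intro S hS ω₁ h1 ω' h' hmem
        exact h1 (hS ω' hmem (by rw [pathAtom_congr h']; exact mem_pathAtom_self X t ω₁))
      measurableSet_iUnion := by
        intro f hf ω₁ h1
        obtain ⟨i, hi⟩ := Set.mem_iUnion.1 h1
        exact (hf i ω₁ hi).trans (Set.subset_iUnion f i) }
  have hle : natSigma X t ≤ m' := by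
    refine iSup₂_le fun s hs => ?_
    rintro S ⟨U, _, rfl⟩ ω₁ h1 ω' h'
    simpa only [Set.mem_preimage, h' s hs] using h1
  exact hle B hB

lemma atom_inter_zero_or_full {P : Measure Ω} {X : ℕ → Ω → (Fin N → ℝ)}
    {F : Filtration ℕ mΩ}
    (hF : IsCompletedNaturalFiltration P X F) {t : ℕ} {A : Set Ω}
    (hA : MeasurableSet[F t] A) (ω₀ : Ω) :
    P (pathAtom X t ω₀ ∩ A) = 0 ∨ P (pathAtom X t ω₀ \ A) = 0 := by
  obtain ⟨B, hB, hAB⟩ := (hF t A).1 hA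
  have hsat := saturated_of_natSigma hB
  have hABae : A =ᵐ[P] B := by rwa [← measure_symmDiff_eq_zero_iff]
  have h1 : (pathAtom X t ω₀ ∩ A : Set Ω) =ᵐ[P] (pathAtom X t ω₀ ∩ B : Set Ω) :=
    ae_eq_set_inter (ae_eq_refl _) hABae
  have h2 : (pathAtom X t ω₀ \ A : Set Ω) =ᵐ[P] (pathAtom X t ω₀ \ B : Set Ω) := by
    rw [Set.diff_eq, Set.diff_eq]
    exact ae_eq_set_inter (ae_eq_refl _) (ae_eq_set_compl_compl.2 hABae)
  by_cases hc : ∃ ω₁, ω₁ ∈ pathAtom X t ω₀ ∩ B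
  · right
    obtain ⟨ω₁, hm, hB1⟩ := hc
    have hsub : pathAtom X t ω₀ ⊆ B := by
      rw [← pathAtom_congr hm]; exact hsat ω₁ hB1
    rw [measure_congr h2, Set.diff_eq_empty.2 hsub, measure_empty]
  · left
    rw [measure_congr h1, Set.eq_empty_iff_forall_notMem.2 (fun ω h => hc ⟨ω, h⟩),
      measure_empty]

lemma diff_null_of_inter_full {P : Measure Ω} [IsProbabilityMeasure P] {C A : Set Ω}
    (hA : MeasurableSet A) (h : P (C ∩ A) = P C) : P (C \ A) = 0 := by
  have h1 : P (C ∩ A) + P (C \ A) = P (C ∩ A) + 0 := by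
    rw [add_zero, measure_inter_add_diff C hA, h]
  exact (ENNReal.add_right_inj (measure_ne_top P _)).1 h1

lemma atom_inter_cases {P : Measure Ω} [IsProbabilityMeasure P] {X : ℕ → Ω → (Fin N → ℝ)}
    {F : Filtration ℕ mΩ}
    (hF : IsCompletedNaturalFiltration P X F) {t : ℕ} {A : Set Ω}
    (hA : MeasurableSet[F t] A) (ω₀ : Ω) :
    P (pathAtom X t ω₀ ∩ A) = 0 ∨ P (pathAtom X t ω₀ ∩ A) = P (pathAtom X t ω₀) := by
  rcases atom_inter_zero_or_full hF hA ω₀ with h | h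
  · exact Or.inl h
  · right
    rw [← measure_inter_add_diff (pathAtom X t ω₀) (F.le t _ hA), h, add_zero]

lemma exists_mem_of_pos {P : Measure Ω} {S : Set Ω} (hS : 0 < P S) {Q : Ω → Prop}
    (hQ : ∀ᵐ ω ∂P, Q ω) : ∃ ω ∈ S, Q ω := by
  by_contra hc
  push_neg at hc
  exact absurd (measure_mono_null (fun ω h => hc ω h) (ae_iff.1 hQ)) hS.ne'

lemma ae_const_on_atom {P : Measure Ω} [IsProbabilityMeasure P]
    {X : ℕ → Ω → (Fin N → ℝ)} {F : Filtration ℕ mΩ}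
    (hF : IsCompletedNaturalFiltration P X F) {t : ℕ} {g : Ω → ℝ}
    (hg : Measurable[F t] g) {ω₀ : Ω} (hpos : 0 < P (pathAtom X t ω₀)) :
    ∃ c : ℝ, ∀ᵐ ω ∂P, ω ∈ pathAtom X t ω₀ → g ω = c := by
  set C := pathAtom X t ω₀ with hC
  have hCm : MeasurableSet C := F.le t _ (pathAtom_measurableSet hF t ω₀)
  have hcases : ∀ r : ℝ, P (C ∩ {ω | g ω < r}) = 0 ∨ P (C ∩ {ω | g ω < r}) = P C :=
    fun r => atom_inter_cases hF (hg measurableSet_Iio) ω₀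
  set T := {r : ℝ | P (C ∩ {ω | g ω < r}) ≠ 0} with hT
  have hTmono : ∀ r r' : ℝ, r ≤ r' → r ∈ T → r' ∈ T := by
    intro r r' hle hr h0
    exact hr (measure_mono_null
      (Set.inter_subset_inter_right C (fun ω (h : g ω < r) => lt_of_lt_of_le h hle)) h0)
  have hTne : T.Nonempty := by
    by_contra hc
    rw [Set.not_nonempty_iff_eq_empty] at hc
    have hall : ∀ n : ℕ, P (C ∩ {ω | g ω < (n : ℝ)}) = 0 := by
      intro n
      by_contra h0
      have hmem : ((n : ℝ)) ∈ T := h0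
      rw [hc] at hmem
      exact Set.notMem_empty _ hmem
    have hsub : C ⊆ ⋃ n : ℕ, C ∩ {ω | g ω < (n : ℝ)} := by
      intro ω hω
      obtain ⟨n, hn⟩ := exists_nat_gt (g ω)
      exact Set.mem_iUnion.2 ⟨n, hω, hn⟩
    exact absurd (measure_mono_null hsub (measure_iUnion_null hall)) hpos.ne'
  have hbdd : BddBelow T := by
    have hex : ∃ n : ℕ, P (C ∩ {ω | g ω < -(n : ℝ)}) = 0 := by
      by_contra hc
      push_neg at hc
      have hfull : ∀ n : ℕ, P (C \ {ω | g ω < -(n : ℝ)}) = 0 := fun n =>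
        diff_null_of_inter_full (F.le t _ (hg measurableSet_Iio))
          ((hcases _).resolve_left (hc n))
      have hsub : C ⊆ ⋃ n : ℕ, C \ {ω | g ω < -(n : ℝ)} := by
        intro ω hω
        obtain ⟨n, hn⟩ := exists_nat_gt (-(g ω))
        exact Set.mem_iUnion.2 ⟨n, hω, by simp only [Set.mem_setOf_eq]; linarith⟩
      exact absurd (measure_mono_null hsub (measure_iUnion_null hfull)) hpos.ne'
    obtain ⟨n, hn⟩ := hex
    refine ⟨-(n : ℝ), fun r hr => ?_⟩
    by_contra hlt
    push_neg at hlt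
    exact (hTmono r _ hlt.le hr) hn
  set c := sInf T with hc
  have ha : ∀ q : ℚ, c < (q : ℝ) → ∀ᵐ ω ∂P, ω ∈ C → g ω < (q : ℝ) := by
    intro q hq
    obtain ⟨r, hrT, hrq⟩ := exists_lt_of_csInf_lt hTne hq
    have hfull : P (C \ {ω | g ω < r}) = 0 :=
      diff_null_of_inter_full (F.le t _ (hg measurableSet_Iio))
        ((hcases r).resolve_left hrT)
    have hsub : {ω | ¬ (ω ∈ C → g ω < (q:ℝ))} ⊆ C \ {ω | g ω < r} := by
      intro ω hω
      rw [Set.mem_setOf_eq] at hω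
      push_neg at hω
      exact ⟨hω.1, fun hlt => absurd (hlt.trans hrq) (not_lt.2 hω.2)⟩
    exact ae_iff.2 (measure_mono_null hsub hfull)
  have hb : ∀ q : ℚ, (q : ℝ) < c → ∀ᵐ ω ∂P, ω ∈ C → ¬ g ω < (q : ℝ) := by
    intro q hq
    have hqT : ((q : ℝ)) ∉ T := fun hmem => absurd (csInf_le hbdd hmem) (not_le.2 hq)
    have h0 : P (C ∩ {ω | g ω < (q:ℝ)}) = 0 := by_contra fun h => hqT h
    have hsub : {ω | ¬ (ω ∈ C → ¬ g ω < (q:ℝ))} ⊆ C ∩ {ω | g ω < (q:ℝ)} := by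
      intro ω hω
      rw [Set.mem_setOf_eq] at hω
      push_neg at hω
      exact ⟨hω.1, hω.2⟩
    exact ae_iff.2 (measure_mono_null hsub h0)
  refine ⟨c, ?_⟩
  have hall : ∀ᵐ ω ∂P, (∀ q : ℚ, c < (q:ℝ) → (ω ∈ C → g ω < q)) ∧
      (∀ q : ℚ, (q:ℝ) < c → (ω ∈ C → ¬ g ω < q)) := by
    refine ((ae_all_iff.2 fun q => ?_).and (ae_all_iff.2 fun q => ?_))
    · by_cases hq : c < (q : ℝ)
      · filter_upwards [ha q hq] with ω h _; exact h
      · filter_upwards with ω h; exact absurd h hq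
    · by_cases hq : (q : ℝ) < c
      · filter_upwards [hb q hq] with ω h _; exact h
      · filter_upwards with ω h; exact absurd h hq
  filter_upwards [hall] with ω h hωC
  rcases h with ⟨h1, h2⟩
  by_contra hne
  rcases lt_or_gt_of_ne hne with hlt | hlt
  · obtain ⟨q, hq1, hq2⟩ := exists_rat_btwn hlt
    exact (h2 q hq2 hωC) hq1
  · obtain ⟨q, hq1, hq2⟩ := exists_rat_btwn hlt
    exact absurd (h1 q hq1 hωC) (not_lt.2 hq2.le)

open Classical in
noncomputable def aeVal (P : Measure Ω) (g : Ω → ℝ) (S : Set Ω) : ℝ :=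
  if h : ∃ c : ℝ, ∀ᵐ ω ∂P, ω ∈ S → g ω = c then h.choose else 0

lemma aeVal_spec {P : Measure Ω} {g : Ω → ℝ} {S : Set Ω}
    (h : ∃ c : ℝ, ∀ᵐ ω ∂P, ω ∈ S → g ω = c) :
    ∀ᵐ ω ∂P, ω ∈ S → g ω = aeVal P g S := by
  rw [aeVal, dif_pos h]; exact h.choose_spec

lemma aeVal_eq {P : Measure Ω} {g : Ω → ℝ} {S : Set Ω} (hS : 0 < P S)
    (h : ∃ c : ℝ, ∀ᵐ ω ∂P, ω ∈ S → g ω = c) {c : ℝ}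
    (hc : ∀ᵐ ω ∂P, ω ∈ S → g ω = c) : aeVal P g S = c := by
  obtain ⟨ω, hω, h1, h2⟩ := exists_mem_of_pos hS ((aeVal_spec h).and hc)
  rw [← h1 hω, h2 hω]

end Aux2
section Aux3
variable {Ω : Type*} {mΩ : MeasurableSpace Ω} {N : ℕ}

lemma pathAtom_eq_fiber {X : ℕ → Ω → (Fin N → ℝ)} {idx : Ω → ℕ → Fin N}
    (hidx : ∀ s ω, X s ω = e N (idx ω s)) (t : ℕ) (ω₀ : Ω) :
    pathAtom X t ω₀ =
      (fun ω => (fun s : Fin (t+1) => idx ω s)) ⁻¹' {fun s : Fin (t+1) => idx ω₀ s} := by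
  ext ω'
  simp only [Set.mem_preimage, Set.mem_singleton_iff, pathAtom, Set.mem_setOf_eq]
  constructor
  · intro h
    funext s
    have h2 := h s (Nat.lt_succ_iff.1 s.isLt)
    rw [hidx, hidx] at h2
    exact e_inj h2
  · intro h s hs
    rw [hidx s ω', hidx s ω₀]
    exact congrArg (e N) (congrFun h ⟨s, Nat.lt_succ_of_le hs⟩)

lemma ae_pos_atom {P : Measure Ω} [IsProbabilityMeasure P] {X : ℕ → Ω → (Fin N → ℝ)}
    {idx : Ω → ℕ → Fin N} (hidx : ∀ s ω, X s ω = e N (idx ω s)) (t : ℕ) :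
    ∀ᵐ ω ∂P, 0 < P (pathAtom X t ω) := by
  rw [ae_iff]
  set r : Ω → (Fin (t+1) → Fin N) := fun ω s => idx ω s with hr
  have hatom : ∀ ω, pathAtom X t ω = r ⁻¹' {r ω} := fun ω => pathAtom_eq_fiber hidx t ω
  have hsub : {ω | ¬ 0 < P (pathAtom X t ω)} ⊆
      ⋃ c : Fin (t+1) → Fin N, {ω | r ω = c ∧ P (r ⁻¹' {c}) = 0} := by
    intro ω hω
    rw [Set.mem_setOf_eq, not_lt, le_zero_iff] at hω
    exact Set.mem_iUnion.2 ⟨r ω, rfl, by rw [← hatom ω]; exact hω⟩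
  refine measure_mono_null hsub (measure_iUnion_null fun c => ?_)
  by_cases hc : P (r ⁻¹' {c}) = 0
  · exact measure_mono_null (fun ω hω => hω.1) hc
  · have hempty : {ω | r ω = c ∧ P (r ⁻¹' {c}) = 0} = ∅ := by
      rw [Set.eq_empty_iff_forall_notMem]
      rintro ω ⟨_, h2⟩
      exact hc h2
    rw [hempty, measure_empty]

lemma ae_atoms {P : Measure Ω} [IsProbabilityMeasure P] {X : ℕ → Ω → (Fin N → ℝ)}
    {idx : Ω → ℕ → Fin N} (hidx : ∀ s ω, X s ω = e N (idx ω s)) (t : ℕ)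
    {Q : Ω → Prop}
    (hQ : ∀ ω₀ : Ω, 0 < P (pathAtom X t ω₀) → ∀ᵐ ω ∂P, ω ∈ pathAtom X t ω₀ → Q ω) :
    ∀ᵐ ω ∂P, 0 < P (pathAtom X t ω) → Q ω := by
  rw [ae_iff]
  set r : Ω → (Fin (t+1) → Fin N) := fun ω s => idx ω s with hr
  have hatom : ∀ ω, pathAtom X t ω = r ⁻¹' {r ω} := fun ω => pathAtom_eq_fiber hidx t ω
  have hsub : {ω | ¬ (0 < P (pathAtom X t ω) → Q ω)} ⊆
      ⋃ c : Fin (t+1) → Fin N, {ω | r ω = c ∧ 0 < P (r ⁻¹' {c}) ∧ ¬ Q ω} := by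
    intro ω hω
    rw [Set.mem_setOf_eq] at hω
    push_neg at hω
    refine Set.mem_iUnion.2 ⟨r ω, rfl, ?_, hω.2⟩
    rw [← hatom ω]; exact hω.1
  refine measure_mono_null hsub (measure_iUnion_null fun c => ?_)
  by_cases hc : ∃ ω₀, r ω₀ = c ∧ 0 < P (r ⁻¹' {c})
  · obtain ⟨ω₀, hc1, hc2⟩ := hc
    have hpos : 0 < P (pathAtom X t ω₀) := by rw [hatom ω₀, hc1]; exact hc2
    have hnull : P {ω | ¬ (ω ∈ pathAtom X t ω₀ → Q ω)} = 0 := ae_iff.1 (hQ ω₀ hpos)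
    refine measure_mono_null ?_ hnull
    rintro ω ⟨h1, _, h3⟩
    rw [Set.mem_setOf_eq]
    push_neg
    refine ⟨?_, h3⟩
    rw [hatom ω₀, hc1]
    exact h1
  · have hempty : {ω | r ω = c ∧ 0 < P (r ⁻¹' {c}) ∧ ¬ Q ω} = ∅ := by
      rw [Set.eq_empty_iff_forall_notMem]
      rintro ω ⟨h1, h2, _⟩
      exact hc ⟨ω, h1, h2⟩
    rw [hempty, measure_empty]

lemma mulVec_e {n : ℕ} (M : Matrix (Fin n) (Fin n) ℝ) (k j : Fin n) :
    M.mulVec (e n k) j = M j k := by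
  simp [Matrix.mulVec, dotProduct, e, Pi.single_apply, mul_ite]

lemma X_apply_eq_indicator {X : ℕ → Ω → (Fin N → ℝ)} (hX : BasisValued X)
    (u : ℕ) (j : Fin N) (ω : Ω) :
    X u ω j = Set.indicator {ω' | X u ω' = e N j} (fun _ => (1:ℝ)) ω := by
  obtain ⟨i, hi⟩ := hX u ω
  by_cases hij : i = j
  · subst hij
    rw [Set.indicator_of_mem (by exact hi), hi, e, Pi.single_eq_same]
  · rw [Set.indicator_of_notMem, hi, e, Pi.single_eq_of_ne (Ne.symm hij)]
    rw [Set.mem_setOf_eq, hi]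
    exact fun h => hij (e_inj h)

lemma abs_X_apply_le_one {X : ℕ → Ω → (Fin N → ℝ)} (hX : BasisValued X)
    (u : ℕ) (j : Fin N) (ω : Ω) : |X u ω j| ≤ 1 := by
  rw [X_apply_eq_indicator hX]
  by_cases h : ω ∈ {ω' | X u ω' = e N j}
  · rw [Set.indicator_of_mem h]; norm_num
  · rw [Set.indicator_of_notMem h]; norm_num

lemma integrable_X_apply {P : Measure Ω} [IsProbabilityMeasure P]
    {X : ℕ → Ω → (Fin N → ℝ)} {F : Filtration ℕ mΩ}
    (hF : IsCompletedNaturalFiltration P X F) (hX : BasisValued X) (u : ℕ) (j : Fin N) :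
    Integrable (fun ω => X u ω j) P := by
  refine (integrable_const (1:ℝ)).mono'
    (((measurable_pi_apply j).comp (measurable_X hF u)).aestronglyMeasurable)
    (ae_of_all _ fun ω => ?_)
  rw [Real.norm_eq_abs]
  exact abs_X_apply_le_one hX u j ω

lemma cond_prob_atom {P : Measure Ω} [IsProbabilityMeasure P] {X : ℕ → Ω → (Fin N → ℝ)}
    {F : Filtration ℕ mΩ} {A : ℕ → Matrix (Fin N) (Fin N) ℝ}
    (hF : IsCompletedNaturalFiltration P X F) (hX : BasisValued X)
    (hA : IsMarkovChain P F X A) (t : ℕ) (ω₀ : Ω) {k : Fin N} (hk : X t ω₀ = e N k)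
    (j : Fin N) :
    (P ({ω | X (t+1) ω = e N j} ∩ pathAtom X t ω₀)).toReal
      = A t j k * (P (pathAtom X t ω₀)).toReal := by
  set G := pathAtom X t ω₀ with hG
  have hGmF : MeasurableSet[F t] G := pathAtom_measurableSet hF t ω₀
  have hGm : MeasurableSet G := F.le t _ hGmF
  have hfInt : Integrable (fun ω => X (t+1) ω j) P := integrable_X_apply hF hX (t+1) j
  have hBm : MeasurableSet {ω | X (t+1) ω = e N j} :=
    measurable_X hF (t+1) (measurableSet_singleton (e N j))
  have step1 : ∫ ω in G, (P[(fun ω' => X (t+1) ω' j)|F t]) ω ∂P = ∫ ω in G, X (t+1) ω j ∂P :=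
    setIntegral_condExp (F.le t) hfInt hGmF
  have step2 : ∫ ω in G, (P[(fun ω' => X (t+1) ω' j)|F t]) ω ∂P
      = ∫ ω in G, (A t).mulVec (X t ω) j ∂P := by
    refine setIntegral_congr_ae hGm ?_
    filter_upwards [hA.2 t j] with ω h _
    exact h
  have step3 : ∫ ω in G, (A t).mulVec (X t ω) j ∂P = A t j k * (P G).toReal := by
    rw [setIntegral_congr_fun hGm (g := fun _ => A t j k) (fun ω hω => by
      rw [show X t ω = e N k from (hω t le_rfl).trans hk, mulVec_e])]
    rw [setIntegral_const, smul_eq_mul, mul_comm]; rfl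
  have step4 : ∫ ω in G, X (t+1) ω j ∂P = (P ({ω | X (t+1) ω = e N j} ∩ G)).toReal := by
    rw [setIntegral_congr_fun hGm
      (g := fun ω => Set.indicator {ω' | X (t+1) ω' = e N j} (fun _ => (1:ℝ)) ω)
      (fun ω _ => X_apply_eq_indicator hX (t+1) j ω)]
    rw [setIntegral_indicator hBm, setIntegral_const, smul_eq_mul, mul_one, Set.inter_comm]; rfl
  rw [← step4, ← step1, step2, step3]

lemma cond_prob_pos_iff {P : Measure Ω} [IsProbabilityMeasure P] {X : ℕ → Ω → (Fin N → ℝ)}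
    {F : Filtration ℕ mΩ} {A : ℕ → Matrix (Fin N) (Fin N) ℝ}
    (hF : IsCompletedNaturalFiltration P X F) (hX : BasisValued X)
    (hA : IsMarkovChain P F X A) (t : ℕ) (ω₀ : Ω) {k : Fin N} (hk : X t ω₀ = e N k)
    (j : Fin N) (hpos : 0 < P (pathAtom X t ω₀)) :
    0 < P ({ω | X (t+1) ω = e N j} ∩ pathAtom X t ω₀) ↔ 0 < A t j k := by
  have hG : 0 < (P (pathAtom X t ω₀)).toReal :=
    ENNReal.toReal_pos hpos.ne' (measure_ne_top P _)
  have heq := cond_prob_atom hF hX hA t ω₀ hk j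
  constructor
  · intro h
    have h1 : 0 < (P ({ω | X (t+1) ω = e N j} ∩ pathAtom X t ω₀)).toReal :=
      ENNReal.toReal_pos h.ne' (measure_ne_top P _)
    rw [heq] at h1
    nlinarith
  · intro h
    have h1 : 0 < (P ({ω | X (t+1) ω = e N j} ∩ pathAtom X t ω₀)).toReal := by
      rw [heq]; exact mul_pos h hG
    by_contra hzero
    rw [not_lt, le_zero_iff] at hzero
    rw [hzero] at h1
    simp at h1

end Aux3
section Aux4
variable {Ω : Type*} {mΩ : MeasurableSpace Ω} {N : ℕ}

lemma dotR_sub_swap (z z' v : Fin N → ℝ) : dotR (z' - z) v = - dotR (z - z') v := by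
  have h : dotR (z' - z) v + dotR (z - z') v = 0 := by
    rw [dotR, dotR, ← Finset.sum_add_distrib,
      show (0:ℝ) = ∑ _i : Fin N, (0:ℝ) from Finset.sum_const_zero.symm]
    exact Finset.sum_congr rfl fun i _ => by simp only [Pi.sub_apply]; ring
  linarith

lemma dotR_sub_fun (z a b : Fin N → ℝ) :
    dotR z (fun i => a i - b i) = dotR z a - dotR z b := by
  rw [dotR, dotR, dotR, ← Finset.sum_sub_distrib]
  exact Finset.sum_congr rfl fun i _ => by ring

lemma exists_pos_col {A : Matrix (Fin N) (Fin N) ℝ}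
    (hnn : ∀ i j, 0 ≤ A i j) (hsum : ∀ jj, ∑ i, A i jj = 1) (k : Fin N) :
    ∃ i, 0 < A i k := by
  by_contra hc
  push_neg at hc
  have h1 : ∑ i, A i k ≤ 0 := Finset.sum_nonpos fun i _ => hc i
  rw [hsum k] at h1
  linarith

lemma exists_w_nonneg {A : Matrix (Fin N) (Fin N) ℝ}
    (hnn : ∀ i j, 0 ≤ A i j) (hsum : ∀ jj, ∑ i, A i jj = 1) (k : Fin N) (d : Fin N → ℝ) :
    ∃ j, 0 < A j k ∧ 0 ≤ dotR d (fun i => e N j i - A.mulVec (e N k) i) := by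
  by_contra hc
  push_neg at hc
  have hzero : ∑ j, A j k * dotR d (fun i => e N j i - A.mulVec (e N k) i) = 0 := by
    simp only [dotR, Finset.mul_sum]
    rw [Finset.sum_comm,
      show (0:ℝ) = ∑ _i : Fin N, (0:ℝ) from Finset.sum_const_zero.symm]
    refine Finset.sum_congr rfl fun i _ => ?_
    have h1 : ∑ j, A j k * (d i * (e N j i - A.mulVec (e N k) i))
        = (∑ j, A j k * e N j i) * d i - (∑ j, A j k) * (d i * A.mulVec (e N k) i) := by
      rw [Finset.sum_mul, Finset.sum_mul, ← Finset.sum_sub_distrib]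
      exact Finset.sum_congr rfl fun j _ => by ring
    have h2 : ∑ j, A j k * e N j i = A i k := by
      simp [e, Pi.single_apply, mul_ite]
    rw [h1, hsum k, h2, mulVec_e]
    ring
  obtain ⟨j₀, hj₀⟩ := exists_pos_col hnn hsum k
  have hlt : ∑ j, A j k * dotR d (fun i => e N j i - A.mulVec (e N k) i)
      < ∑ _j : Fin N, (0:ℝ) := by
    refine Finset.sum_lt_sum (fun j _ => ?_) ⟨j₀, Finset.mem_univ _, ?_⟩
    · by_cases h : 0 < A j k
      · have hw := (hc j h).le
        nlinarith [hnn j k]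
      · rw [le_antisymm (not_lt.1 h) (hnn j k)]
        simp
    · exact mul_neg_of_pos_of_neg hj₀ (hc j₀ hj₀)
  rw [hzero, Finset.sum_const_zero] at hlt
  exact lt_irrefl _ hlt

noncomputable def yvf (P : Measure Ω) (X : ℕ → Ω → (Fin N → ℝ)) (Y : ℕ → Ω → ℝ)
    (t : ℕ) (ω₀ : Ω) : ℝ := aeVal P (Y t) (pathAtom X t ω₀)

noncomputable def zvf (P : Measure Ω) (X : ℕ → Ω → (Fin N → ℝ)) (Z : ℕ → Ω → Fin N → ℝ)
    (t : ℕ) (ω₀ : Ω) : Fin N → ℝ :=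
  fun i => aeVal P (fun ω => Z t ω i) (pathAtom X t ω₀)

lemma yvf_congr {P : Measure Ω} {X : ℕ → Ω → (Fin N → ℝ)} {Y : ℕ → Ω → ℝ} {t : ℕ}
    {ω₀ ω₁ : Ω} (h : ω₁ ∈ pathAtom X t ω₀) : yvf P X Y t ω₁ = yvf P X Y t ω₀ := by
  unfold yvf; rw [pathAtom_congr h]

lemma yvf_ex {P : Measure Ω} [IsProbabilityMeasure P] {F : Filtration ℕ mΩ}
    {X : ℕ → Ω → (Fin N → ℝ)} (hF : IsCompletedNaturalFiltration P X F)
    {Y : ℕ → Ω → ℝ} (hY : Adapted F Y) {t : ℕ} {ω₀ : Ω}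
    (hpos : 0 < P (pathAtom X t ω₀)) :
    ∃ c : ℝ, ∀ᵐ ω ∂P, ω ∈ pathAtom X t ω₀ → Y t ω = c :=
  ae_const_on_atom hF (hY t) hpos

lemma yvf_ae {P : Measure Ω} [IsProbabilityMeasure P] {F : Filtration ℕ mΩ}
    {X : ℕ → Ω → (Fin N → ℝ)} (hF : IsCompletedNaturalFiltration P X F)
    {Y : ℕ → Ω → ℝ} (hY : Adapted F Y) {t : ℕ} {ω₀ : Ω}
    (hpos : 0 < P (pathAtom X t ω₀)) :
    ∀ᵐ ω ∂P, ω ∈ pathAtom X t ω₀ → Y t ω = yvf P X Y t ω₀ :=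
  aeVal_spec (yvf_ex hF hY hpos)

lemma zvf_ae {P : Measure Ω} [IsProbabilityMeasure P] {F : Filtration ℕ mΩ}
    {X : ℕ → Ω → (Fin N → ℝ)} (hF : IsCompletedNaturalFiltration P X F)
    {Z : ℕ → Ω → Fin N → ℝ} (hZ : Adapted F Z) {t : ℕ} {ω₀ : Ω}
    (hpos : 0 < P (pathAtom X t ω₀)) :
    ∀ᵐ ω ∂P, ω ∈ pathAtom X t ω₀ → Z t ω = zvf P X Z t ω₀ := by
  have h : ∀ i : Fin N, ∀ᵐ ω ∂P, ω ∈ pathAtom X t ω₀ → Z t ω i = zvf P X Z t ω₀ i :=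
    fun i => aeVal_spec (ae_const_on_atom hF
      ((measurable_pi_apply i).comp (hZ t)) hpos)
  filter_upwards [ae_all_iff.2 h] with ω hω hmem
  funext i
  exact hω i hmem

lemma comp_max {P : Measure Ω} [IsProbabilityMeasure P] {F : Filtration ℕ mΩ}
    {X : ℕ → Ω → (Fin N → ℝ)} (hX : BasisValued X)
    (hF : IsCompletedNaturalFiltration P X F)
    {A : ℕ → Matrix (Fin N) (Fin N) ℝ} (hA : IsMarkovChain P F X A)
    {ftil : (Fin N → ℝ) → ℕ → (Fin N → ℝ) → ℝ}
    (hfComp : ComparisonCondition P F X fun ω t _ z => ftil (X t ω) t z)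
    (t : ℕ) (ω₀ : Ω) (hpos : 0 < P (pathAtom X t ω₀)) {k : Fin N} (hk : X t ω₀ = e N k)
    (z z' : Fin N → ℝ) (hf : 0 < ftil (e N k) t z - ftil (e N k) t z') :
    ∃ j, 0 < A t j k ∧ ftil (e N k) t z - ftil (e N k) t z' <
      dotR (z - z') (fun m => e N j m - (A t).mulVec (e N k) m) := by
  have hEv : ∀ᵐ ω ∂P, ∀ i, (P[(fun ω'' => X (t+1) ω'' i)|F t]) ω
      = (A t).mulVec (X t ω) i := ae_all_iff.2 (hA.2 t)
  obtain ⟨ω, hωmem, hcl, hEvω⟩ := exists_mem_of_pos hpos ((hfComp t 0 z' z ω₀ hpos).and hEv)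
  have hXt : X t ω = e N k := (hωmem t le_rfl).trans hk
  have hfun : ∀ i : Fin N, (fun m => e N i m - (P[(fun ω'' => X (t+1) ω'' m)|F t]) ω)
      = fun m => e N i m - (A t).mulVec (e N k) m := by
    intro i; funext m; rw [hEvω m, hXt]
  set W : Finset ℝ := (Finset.univ.filter fun i : Fin N => 0 < A t i k).image
    (fun i => dotR (z' - z) fun m => e N i m - (A t).mulVec (e N k) m) with hW
  have hWne : W.Nonempty := by
    obtain ⟨i, hi⟩ := exists_pos_col (hA.1 t).1 (hA.1 t).2 k
    exact ⟨_, Finset.mem_image.2 ⟨i, Finset.mem_filter.2 ⟨Finset.mem_univ _, hi⟩, rfl⟩⟩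
  have hset : {r : ℝ | ∃ i : Fin N,
      0 < P ({ω' | X (t + 1) ω' = e N i} ∩ pathAtom X t ω₀) ∧
      r = dotR (z' - z) (fun m => e N i m - (P[(fun ω'' => X (t + 1) ω'' m)|F t]) ω)}
      = ↑W := by
    ext r
    simp only [Set.mem_setOf_eq, hW, Finset.coe_image, Set.mem_image, Finset.mem_coe,
      Finset.mem_filter, Finset.mem_univ, true_and]
    constructor
    · rintro ⟨i, hpos', hr⟩
      exact ⟨i, (cond_prob_pos_iff hF hX hA t ω₀ hk i hpos).1 hpos', by rw [hr, hfun i]⟩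
    · rintro ⟨i, hi, hr⟩
      exact ⟨i, (cond_prob_pos_iff hF hX hA t ω₀ hk i hpos).2 hi, by rw [← hr, hfun i]⟩
  have hmj : minJump P F X t ω₀ z' z ω = W.min' hWne := by
    rw [minJump, hset]
    exact hWne.csInf_eq_min'
  simp only [hXt] at hcl
  have hne : minJump P F X t ω₀ z' z ω ≠ 0 := by
    intro h0
    have := (hcl hωmem).1 h0
    linarith
  have hlt := (hcl hωmem).2 hne
  rw [hmj] at hlt
  obtain ⟨i, hi, hival⟩ := Finset.mem_image.1 (W.min'_mem hWne)
  rw [← hival] at hlt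
  refine ⟨i, (Finset.mem_filter.1 hi).2, ?_⟩
  rw [dotR_sub_swap z z'] at hlt
  linarith

lemma step_formula {P : Measure Ω} [IsProbabilityMeasure P] {F : Filtration ℕ mΩ}
    {X : ℕ → Ω → (Fin N → ℝ)} (hX : BasisValued X)
    (hF : IsCompletedNaturalFiltration P X F)
    {A : ℕ → Matrix (Fin N) (Fin N) ℝ} (hA : IsMarkovChain P F X A)
    {α : ℝ} {ftil : (Fin N → ℝ) → ℕ → (Fin N → ℝ) → ℝ}
    {Y : ℕ → Ω → ℝ} {Z : ℕ → Ω → Fin N → ℝ}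
    (hYZ : SolvesDiscountedBSDE P F X α (fun ω t z => ftil (X t ω) t z) Y Z)
    (t : ℕ) (ω₀ : Ω) (hpos : 0 < P (pathAtom X t ω₀)) {k : Fin N} (hk : X t ω₀ = e N k)
    {j : Fin N} (hj : 0 < A t j k) :
    ∃ ω₁, 0 < P (pathAtom X (t+1) ω₁) ∧ X (t+1) ω₁ = e N j ∧
      ω₁ ∈ pathAtom X t ω₀ ∧
      yvf P X Y (t+1) ω₁ =
        (1 + α) * yvf P X Y t ω₀ - ftil (e N k) t (zvf P X Z t ω₀)
          + dotR (zvf P X Z t ω₀) (fun i => e N j i - (A t).mulVec (e N k) i) := by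
  set S := pathAtom X t ω₀ ∩ {ω | X (t+1) ω = e N j} with hS
  have hSpos : 0 < P S := by
    rw [hS, Set.inter_comm]
    exact (cond_prob_pos_iff hF hX hA t ω₀ hk j hpos).2 hj
  set c := (1 + α) * yvf P X Y t ω₀ - ftil (e N k) t (zvf P X Z t ω₀)
      + dotR (zvf P X Z t ω₀) (fun i => e N j i - (A t).mulVec (e N k) i) with hc
  have hEv : ∀ᵐ ω ∂P, ∀ i, (P[(fun ω'' => X (t+1) ω'' i)|F t]) ω
      = (A t).mulVec (X t ω) i := ae_all_iff.2 (hA.2 t)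
  have hYc : ∀ᵐ ω ∂P, ω ∈ S → Y (t+1) ω = c := by
    filter_upwards [hYZ.2.2 t (t+1) (Nat.lt_succ_self t), yvf_ae hF hYZ.1 hpos,
      zvf_ae hF hYZ.2.1 hpos, hEv] with ω h1 h2 h3 h4 hmem
    have hXt : X t ω = e N k := (hmem.1 t le_rfl).trans hk
    have hM : Mdiff P F X t ω = fun i => e N j i - (A t).mulVec (e N k) i := by
      funext i
      rw [Mdiff, h4 i, hXt, hmem.2]
    simp only [Nat.Ico_succ_singleton, Finset.sum_singleton] at h1
    rw [hM, h3 hmem.1, hXt, h2 hmem.1] at h1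
    rw [h1, hc]
    ring
  obtain ⟨ω₁, hω₁⟩ := nonempty_of_measure_ne_zero hSpos.ne'
  have hatom : pathAtom X (t+1) ω₁ = S := by
    ext ω'
    constructor
    · intro h
      refine ⟨fun s hs => (h s (hs.trans (Nat.le_succ t))).trans (hω₁.1 s hs), ?_⟩
      rw [Set.mem_setOf_eq, h (t+1) le_rfl]
      exact hω₁.2
    · rintro ⟨h1, h2⟩ s hs
      rcases Nat.le_add_one_iff.1 hs with h | h
      · exact (h1 s h).trans (hω₁.1 s h).symm
      · subst h
        exact h2.trans hω₁.2.symm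
  have hpos1 : 0 < P (pathAtom X (t+1) ω₁) := by rw [hatom]; exact hSpos
  refine ⟨ω₁, hpos1, hω₁.2, hω₁.1, ?_⟩
  refine aeVal_eq hpos1 (yvf_ex hF hYZ.1 hpos1) ?_
  rw [hatom]
  exact hYc

end Aux4
section Aux5
variable {Ω : Type*} {mΩ : MeasurableSpace Ω} {N : ℕ}

lemma dotR_sub_left (z z' v : Fin N → ℝ) : dotR (z - z') v = dotR z v - dotR z' v := by
  rw [dotR, dotR, dotR, ← Finset.sum_sub_distrib]
  exact Finset.sum_congr rfl fun i _ => by simp only [Pi.sub_apply]; ring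

lemma yvf_unique {P : Measure Ω} [IsProbabilityMeasure P] {F : Filtration ℕ mΩ}
    {X : ℕ → Ω → (Fin N → ℝ)} (hX : BasisValued X)
    (hF : IsCompletedNaturalFiltration P X F)
    {A : ℕ → Matrix (Fin N) (Fin N) ℝ} (hA : IsMarkovChain P F X A)
    {α : ℝ} (hα : 0 < α) {ftil : (Fin N → ℝ) → ℕ → (Fin N → ℝ) → ℝ}
    (hfComp : ComparisonCondition P F X fun ω t _ z => ftil (X t ω) t z)
    {Y : ℕ → Ω → ℝ} {Z : ℕ → Ω → Fin N → ℝ}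
    (hYZ : SolvesDiscountedBSDE P F X α (fun ω t z => ftil (X t ω) t z) Y Z)
    (hYbdd : ∃ D : ℝ, ∀ t : ℕ, ∀ᵐ ω ∂P, |Y t ω| ≤ D) :
    ∀ (t : ℕ) (ω₀ ω₁ : Ω), 0 < P (pathAtom X t ω₀) → 0 < P (pathAtom X t ω₁) →
      X t ω₀ = X t ω₁ → yvf P X Y t ω₀ = yvf P X Y t ω₁ := by
  obtain ⟨D, hD⟩ := hYbdd
  have hbound : ∀ (t : ℕ) (ω₀ : Ω), 0 < P (pathAtom X t ω₀) → |yvf P X Y t ω₀| ≤ D := by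
    intro t ω₀ hpos
    obtain ⟨ω, hωmem, h1, h2⟩ := exists_mem_of_pos hpos ((yvf_ae hF hYZ.1 hpos).and (hD t))
    rw [← h1 hωmem]; exact h2
  have hstep : ∀ (t : ℕ) (ω₀ ω₁ : Ω), 0 < P (pathAtom X t ω₀) → 0 < P (pathAtom X t ω₁) →
      X t ω₀ = X t ω₁ → 0 < yvf P X Y t ω₀ - yvf P X Y t ω₁ →
      ∃ ω₀' ω₁', 0 < P (pathAtom X (t+1) ω₀') ∧ 0 < P (pathAtom X (t+1) ω₁') ∧
        X (t+1) ω₀' = X (t+1) ω₁' ∧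
        (1 + α) * (yvf P X Y t ω₀ - yvf P X Y t ω₁)
          ≤ yvf P X Y (t+1) ω₀' - yvf P X Y (t+1) ω₁' := by
    intro t ω₀ ω₁ h0 h1 hXX hδ
    obtain ⟨k, hk⟩ := hX t ω₀
    have hk1 : X t ω₁ = e N k := hXX ▸ hk
    have hjex : ∃ j, 0 < A t j k ∧
        ftil (e N k) t (zvf P X Z t ω₀) - ftil (e N k) t (zvf P X Z t ω₁) ≤
        dotR (zvf P X Z t ω₀ - zvf P X Z t ω₁)
          (fun m => e N j m - (A t).mulVec (e N k) m) := by
      by_cases hcase : 0 < ftil (e N k) t (zvf P X Z t ω₀) - ftil (e N k) t (zvf P X Z t ω₁)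
      · obtain ⟨j, hj1, hj2⟩ := comp_max hX hF hA hfComp t ω₀ h0 hk
          (zvf P X Z t ω₀) (zvf P X Z t ω₁) hcase
        exact ⟨j, hj1, hj2.le⟩
      · obtain ⟨j, hj1, hj2⟩ := exists_w_nonneg (hA.1 t).1 (hA.1 t).2 k
          (zvf P X Z t ω₀ - zvf P X Z t ω₁)
        exact ⟨j, hj1, le_trans (not_lt.1 hcase) hj2⟩
    obtain ⟨j, hj, hw⟩ := hjex
    obtain ⟨ω₀', hp0, hx0, _, hy0⟩ := step_formula hX hF hA hYZ t ω₀ h0 hk hj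
    obtain ⟨ω₁', hp1, hx1, _, hy1⟩ := step_formula hX hF hA hYZ t ω₁ h1 hk1 hj
    refine ⟨ω₀', ω₁', hp0, hp1, hx0.trans hx1.symm, ?_⟩
    rw [hy0, hy1]
    rw [dotR_sub_left] at hw
    linarith
  suffices hone : ∀ (t : ℕ) (ω₀ ω₁ : Ω), 0 < P (pathAtom X t ω₀) → 0 < P (pathAtom X t ω₁) →
      X t ω₀ = X t ω₁ → yvf P X Y t ω₀ - yvf P X Y t ω₁ ≤ 0 by
    intro t ω₀ ω₁ h0 h1 hXX
    have ha := hone t ω₀ ω₁ h0 h1 hXX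
    have hb := hone t ω₁ ω₀ h1 h0 hXX.symm
    linarith
  intro t ω₀ ω₁ h0 h1 hXX
  by_contra hneg
  push_neg at hneg
  set δ := yvf P X Y t ω₀ - yvf P X Y t ω₁ with hδ
  have hiter : ∀ s : ℕ, ∃ ω₀' ω₁', 0 < P (pathAtom X (t+s) ω₀') ∧
      0 < P (pathAtom X (t+s) ω₁') ∧ X (t+s) ω₀' = X (t+s) ω₁' ∧
      (1+α)^s * δ ≤ yvf P X Y (t+s) ω₀' - yvf P X Y (t+s) ω₁' := by
    intro s
    induction s with
    | zero => exact ⟨ω₀, ω₁, h0, h1, hXX, by simp [hδ]⟩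
    | succ n ih =>
      obtain ⟨a, b, ha, hb, hab, hle⟩ := ih
      have hpow : 0 < (1+α)^n * δ := mul_pos (pow_pos (by linarith) n) hneg
      have hpos' : 0 < yvf P X Y (t+n) a - yvf P X Y (t+n) b := lt_of_lt_of_le hpow hle
      obtain ⟨a', b', ha', hb', hab', hle'⟩ := hstep (t+n) a b ha hb hab hpos'
      refine ⟨a', b', ha', hb', hab', ?_⟩
      have hmul : (1+α) * ((1+α)^n * δ) ≤ (1+α) * (yvf P X Y (t+n) a - yvf P X Y (t+n) b) :=
        mul_le_mul_of_nonneg_left hle (by linarith)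
      calc (1+α)^(n+1) * δ = (1+α) * ((1+α)^n * δ) := by ring
        _ ≤ (1+α) * (yvf P X Y (t+n) a - yvf P X Y (t+n) b) := hmul
        _ ≤ _ := hle'
  obtain ⟨s, hs⟩ := pow_unbounded_of_one_lt ((2*D)/δ) (show (1:ℝ) < 1 + α by linarith)
  obtain ⟨a, b, ha, hb, _, hle⟩ := hiter s
  have hDa := hbound (t+s) a ha
  have hDb := hbound (t+s) b hb
  have h2D : (2*D) < (1+α)^s * δ := (div_lt_iff₀ hneg).1 hs
  have haabs := abs_le.1 hDa
  have hbabs := abs_le.1 hDb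
  linarith

end Aux5
/-- **Markovian structure of discounted BSDE solutions.** -/
theorem markovian_discounted_solution
    {Ω : Type*} {mΩ : MeasurableSpace Ω} {N : ℕ}
    (P : Measure Ω) [IsProbabilityMeasure P] (F : Filtration ℕ mΩ)
    (X : ℕ → Ω → (Fin N → ℝ)) (hX : BasisValued X)
    (hF : IsCompletedNaturalFiltration P X F)
    (A : ℕ → Matrix (Fin N) (Fin N) ℝ) (hA : IsMarkovChain P F X A)
    (α : ℝ) (hα : 0 < α)
    (ftil : (Fin N → ℝ) → ℕ → (Fin N → ℝ) → ℝ)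
    (L : ℝ) (hL : 0 < L)
    (hfLip : DriverLipschitzNoY P F X L fun ω t z => ftil (X t ω) t z)
    (hfComp : ComparisonCondition P F X fun ω t _ z => ftil (X t ω) t z)
    (C : ℝ) (hC : 0 < C) (hfBdd : ∀ (t : ℕ) (ω : Ω), |ftil (X t ω) t 0| ≤ C)
    (Y : ℕ → Ω → ℝ) (Z : ℕ → Ω → Fin N → ℝ)
    (hYZ : SolvesDiscountedBSDE P F X α (fun ω t z => ftil (X t ω) t z) Y Z)
    (hYbdd : ∃ D : ℝ, ∀ t : ℕ, ∀ᵐ ω ∂P, |Y t ω| ≤ D) :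
    ∃ v : ℕ → Fin N → ℝ,
      (∀ t : ℕ, Y t =ᵐ[P] fun ω => dotR (v t) (X t ω)) ∧
      (∀ t : ℕ, equivMt P F X t (Z t) fun _ => v (t + 1)) ∧
      ∀ (t : ℕ) (k : Fin N), 0 < P {ω | X t ω = e N k} →
        (1 + α) * v t k - ftil (e N k) t (v (t + 1)) -
          dotR (v (t + 1)) ((A t).mulVec (e N k)) = 0 := by
  classical
  have hidx : ∀ (s : ℕ) (ω : Ω), X s ω = e N ((hX s ω).choose) := fun s ω => (hX s ω).choose_spec
  set idx : Ω → ℕ → Fin N := fun ω s => (hX s ω).choose with hidxdef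
  have hidx' : ∀ (s : ℕ) (ω : Ω), X s ω = e N (idx ω s) := hidx
  have huniq := yvf_unique hX hF hA hα hfComp hYZ hYbdd
  set v : ℕ → Fin N → ℝ := fun t k =>
    if h : ∃ ω₀, 0 < P (pathAtom X t ω₀) ∧ X t ω₀ = e N k then yvf P X Y t h.choose else 0
    with hvdef
  have hv_eq : ∀ (t : ℕ) (k : Fin N) (ω₀ : Ω), 0 < P (pathAtom X t ω₀) → X t ω₀ = e N k →
      v t k = yvf P X Y t ω₀ := by
    intro t k ω₀ hp hx
    have hex : ∃ ω', 0 < P (pathAtom X t ω') ∧ X t ω' = e N k := ⟨ω₀, hp, hx⟩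
    rw [hvdef]
    simp only
    rw [dif_pos hex]
    exact huniq t hex.choose ω₀ hex.choose_spec.1 hp (hex.choose_spec.2.trans hx.symm)
  have hvstep : ∀ (t : ℕ) (ω₀ : Ω), 0 < P (pathAtom X t ω₀) → ∀ k, X t ω₀ = e N k →
      ∀ j, 0 < A t j k →
      v (t+1) j = (1 + α) * yvf P X Y t ω₀ - ftil (e N k) t (zvf P X Z t ω₀)
        + dotR (zvf P X Z t ω₀) (fun i => e N j i - (A t).mulVec (e N k) i) := by
    intro t ω₀ hp k hk j hj
    obtain ⟨ω₁, hp1, hx1, _, hy1⟩ := step_formula hX hF hA hYZ t ω₀ hp hk hj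
    rw [hv_eq (t+1) j ω₁ hp1 hx1, hy1]
  -- second bullet, proved first since it is needed for the third
  have hequiv : ∀ t : ℕ, equivMt P F X t (Z t) fun _ => v (t + 1) := by
    intro t
    have hQ1 : ∀ᵐ ω ∂P, 0 < P (pathAtom X t ω) →
        (Z t ω = zvf P X Z t ω ∧ Y t ω = yvf P X Y t ω) := by
      refine ae_atoms hidx' t (fun ω₀ hpos => ?_)
      filter_upwards [zvf_ae hF hYZ.2.1 hpos, yvf_ae hF hYZ.1 hpos] with ω hz hy hmem
      have hatom := pathAtom_congr hmem
      constructor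
      · rw [hz hmem]; unfold zvf; rw [hatom]
      · rw [hy hmem]; unfold yvf; rw [hatom]
    have hEv : ∀ᵐ ω ∂P, ∀ i, (P[(fun ω'' => X (t+1) ω'' i)|F t]) ω
        = (A t).mulVec (X t ω) i := ae_all_iff.2 (hA.2 t)
    have hG : ∀ᵐ ω ∂P,
        dotR (Z t ω - (fun _ : Ω => v (t + 1)) ω) (Mdiff P F X t ω) = 0 := by
      filter_upwards [hQ1, hEv, ae_pos_atom hidx' t, ae_pos_atom hidx' (t+1)]
        with ω hzy hev hpt hpt1
      set k := idx ω t with hkdef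
      set j := idx ω (t+1) with hjdef
      have hXt : X t ω = e N k := hidx' t ω
      have hXt1 : X (t+1) ω = e N j := hidx' (t+1) ω
      have hsub : pathAtom X (t+1) ω ⊆ {ω' | X (t+1) ω' = e N j} ∩ pathAtom X t ω := by
        intro ω' h'
        exact ⟨by rw [Set.mem_setOf_eq, h' (t+1) le_rfl]; exact hXt1,
          fun s hs => h' s (hs.trans (Nat.le_succ t))⟩
      have hjpos : 0 < A t j k :=
        (cond_prob_pos_iff hF hX hA t ω hXt j hpt).1
          (lt_of_lt_of_le hpt1 (measure_mono hsub))
      have hM : Mdiff P F X t ω = fun i => e N j i - (A t).mulVec (e N k) i := by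
        funext i
        rw [Mdiff, hev i, hXt, hXt1]
      have hvj : ∀ i, 0 < A t i k → zvf P X Z t ω i - v (t+1) i =
          - ((1 + α) * yvf P X Y t ω - ftil (e N k) t (zvf P X Z t ω)
            - dotR (zvf P X Z t ω) ((A t).mulVec (e N k))) := by
        intro i hi
        have h1 : dotR (zvf P X Z t ω) (fun m => e N i m - (A t).mulVec (e N k) m)
            = zvf P X Z t ω i - dotR (zvf P X Z t ω) ((A t).mulVec (e N k)) := by
          rw [dotR_sub_fun (zvf P X Z t ω) (fun m => e N i m) ((A t).mulVec (e N k)),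
            show dotR (zvf P X Z t ω) (fun m => e N i m) = zvf P X Z t ω i from
              dotR_e_right (zvf P X Z t ω) i]
        rw [hvstep t ω hpt k hXt i hi, h1]
        ring
      have hsum : dotR (zvf P X Z t ω - v (t+1)) (fun i => e N j i - (A t).mulVec (e N k) i)
          = 0 := by
        have h1 : dotR (zvf P X Z t ω - v (t+1)) (fun i => e N j i - (A t).mulVec (e N k) i)
            = ∑ i, (- ((1 + α) * yvf P X Y t ω - ftil (e N k) t (zvf P X Z t ω)
              - dotR (zvf P X Z t ω) ((A t).mulVec (e N k))))
                * (e N j i - (A t).mulVec (e N k) i) := by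
          rw [dotR]
          refine Finset.sum_congr rfl fun i _ => ?_
          by_cases hi : 0 < A t i k
          · rw [Pi.sub_apply, hvj i hi]
          · have hAik : A t i k = 0 := le_antisymm (not_lt.1 hi) ((hA.1 t).1 i k)
            have hij : i ≠ j := fun h => hi (h ▸ hjpos)
            rw [mulVec_e, hAik, e, Pi.single_eq_of_ne hij]
            ring
        have h2 : ∑ i, (e N j i - (A t).mulVec (e N k) i) = 0 := by
          rw [Finset.sum_sub_distrib]
          have he : ∑ i, e N j i = 1 := by simp [e, Pi.single_apply]
          have hAe : ∑ i, (A t).mulVec (e N k) i = 1 := by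
            rw [Finset.sum_congr rfl (fun i _ => mulVec_e (A t) k i), (hA.1 t).2 k]
          rw [he, hAe]; ring
        rw [h1, ← Finset.mul_sum, h2, mul_zero]
      have hZω : Z t ω = zvf P X Z t ω := (hzy hpt).1
      show dotR (Z t ω - v (t + 1)) (Mdiff P F X t ω) = 0
      rw [hZω, hM]
      exact hsum
    show seminormSq P F X t (fun ω => Z t ω - (fun _ : Ω => v (t + 1)) ω) =ᵐ[P] 0
    have hcongr : (fun ω => (dotR ((fun ω' => Z t ω' - (fun _ : Ω => v (t + 1)) ω') ω)
        (Mdiff P F X t ω)) ^ 2) =ᵐ[P] (0 : Ω → ℝ) := by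
      filter_upwards [hG] with ω h
      show (dotR (Z t ω - (fun _ : Ω => v (t + 1)) ω) (Mdiff P F X t ω)) ^ 2 = 0
      exact (pow_eq_zero_iff two_ne_zero).2 h
    refine (condExp_congr_ae hcongr).trans ?_
    rw [condExp_zero]
  refine ⟨v, ?_, fun t => hequiv t, ?_⟩
  · intro t
    have hQ : ∀ᵐ ω ∂P, 0 < P (pathAtom X t ω) → Y t ω = dotR (v t) (X t ω) := by
      refine ae_atoms hidx' t (fun ω₀ hpos => ?_)
      filter_upwards [yvf_ae hF hYZ.1 hpos] with ω h hmem
      have hXt : X t ω = e N (idx ω₀ t) := (hmem t le_rfl).trans (hidx' t ω₀)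
      rw [h hmem, hXt, dotR_e_right, hv_eq t (idx ω₀ t) ω₀ hpos (hidx' t ω₀)]
    filter_upwards [hQ, ae_pos_atom hidx' t] with ω h1 h2
    exact h1 h2
  · intro t k hk
    obtain ⟨ω₀, hω₀mem, hpos⟩ := exists_mem_of_pos hk (ae_pos_atom hidx' t)
    have hXk : X t ω₀ = e N k := hω₀mem
    have hLip := hfLip t (Z t) (fun _ => v (t + 1)) (hYZ.2.1 t).stronglyMeasurable stronglyMeasurable_const
    have hms : ∀ᵐ ω ∂P,
        mSeminorm P F X t (fun ω' => Z t ω' - (fun _ : Ω => v (t + 1)) ω') ω = 0 := by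
      filter_upwards [hequiv t] with ω h
      have h0 : seminormSq P F X t (fun ω' => Z t ω' - (fun _ : Ω => v (t + 1)) ω') ω = 0 := h
      rw [mSeminorm, h0]
      exact Real.sqrt_zero
    have hfeq : ∀ᵐ ω ∂P, ftil (X t ω) t (Z t ω) = ftil (X t ω) t (v (t + 1)) := by
      filter_upwards [hLip, hms] with ω h1 h2
      have h1' : |ftil (X t ω) t (Z t ω) - ftil (X t ω) t (v (t + 1))| ≤
          L * mSeminorm P F X t (fun ω' => Z t ω' - (fun _ : Ω => v (t + 1)) ω') ω := h1
      rw [h2, mul_zero] at h1'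
      have := abs_nonneg (ftil (X t ω) t (Z t ω) - ftil (X t ω) t (v (t + 1)))
      have habs : |ftil (X t ω) t (Z t ω) - ftil (X t ω) t (v (t + 1))| = 0 := le_antisymm h1' this
      have := abs_eq_zero.1 habs
      linarith
    obtain ⟨ω, hωmem, hzc, hfc⟩ := exists_mem_of_pos hpos
      ((zvf_ae hF hYZ.2.1 hpos).and hfeq)
    have hXω : X t ω = e N k := (hωmem t le_rfl).trans hXk
    have hfz : ftil (e N k) t (zvf P X Z t ω₀) = ftil (e N k) t (v (t + 1)) := by
      have := hfc
      rw [hXω, hzc hωmem] at this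
      exact this
    have hsum : dotR (v (t+1)) ((A t).mulVec (e N k))
        = (1 + α) * yvf P X Y t ω₀ - ftil (e N k) t (zvf P X Z t ω₀) := by
      have h1 : dotR (v (t+1)) ((A t).mulVec (e N k))
          = ∑ i, (((1 + α) * yvf P X Y t ω₀ - ftil (e N k) t (zvf P X Z t ω₀)
            - dotR (zvf P X Z t ω₀) ((A t).mulVec (e N k))) + zvf P X Z t ω₀ i) * A t i k := by
        rw [dotR]
        refine Finset.sum_congr rfl fun i _ => ?_
        rw [mulVec_e]
        by_cases hi : 0 < A t i k
        · rw [hvstep t ω₀ hpos k hXk i hi]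
          have h2 : dotR (zvf P X Z t ω₀) (fun m => e N i m - (A t).mulVec (e N k) m)
              = zvf P X Z t ω₀ i - dotR (zvf P X Z t ω₀) ((A t).mulVec (e N k)) := by
            rw [dotR_sub_fun (zvf P X Z t ω₀) (fun m => e N i m) ((A t).mulVec (e N k)),
              show dotR (zvf P X Z t ω₀) (fun m => e N i m) = zvf P X Z t ω₀ i from
                dotR_e_right (zvf P X Z t ω₀) i]
          rw [h2]
          ring
        · rw [le_antisymm (not_lt.1 hi) ((hA.1 t).1 i k)]
          ring
      have h3 : ∑ i, zvf P X Z t ω₀ i * A t i k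
          = dotR (zvf P X Z t ω₀) ((A t).mulVec (e N k)) := by
        rw [dotR]
        exact Finset.sum_congr rfl fun i _ => by rw [mulVec_e]
      rw [h1]
      simp only [add_mul, Finset.sum_add_distrib]
      rw [← Finset.mul_sum, (hA.1 t).2 k, h3]
      ring
    rw [hv_eq t k ω₀ hpos hXk, hsum, ← hfz]
    ring

end DiscreteEBSDE
end
end

section
/- (Representation of λ via ergodic measures) Let (Y,Z,λ) = (v(X_t), 𝐯, λ) be the unique bounded, stationary, Markovian solution of the EBSDE with γ-balanced Markovian driver f, where 𝐯 ∈ ℝ^N is the vector with entries e_kᵀ𝐯 = v(e_k). Let π denote the ergodic (invariant) measure of X under P. Then λ = Σ_{x∈S} f(x,𝐯)·π({x}). Furthermore, there exists a probability measure π_𝐯 on S such that λ = Σ_{x∈S} f(x,0)·π_𝐯({x}). -/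
open MeasureTheory Finset Filter

noncomputable section

namespace DiscreteEBSDE

variable {Ω : Type*} {mΩ : MeasurableSpace Ω} {N : ℕ}

/-- Auxiliary: a positive-measure set meets any almost-sure event. -/
lemma exists_mem_of_pos_of_ae {Ω : Type*} {mΩ : MeasurableSpace Ω} {P : Measure Ω}
    {E : Set Ω} {Q : Ω → Prop} (hE : 0 < P E) (hQ : ∀ᵐ ω ∂P, Q ω) :
    ∃ ω, ω ∈ E ∧ Q ω := by
  by_contra h
  push_neg at h
  have hsub : E ⊆ {ω | ¬ Q ω} := fun ω hω hQω => h ω hω hQω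
  have := measure_mono_null hsub (ae_iff.mp hQ)
  exact absurd this (ne_of_gt hE)

lemma e_nonneg (N : ℕ) (k i : Fin N) : 0 ≤ e N k i := by
  unfold e
  rw [Pi.single_apply]
  split <;> norm_num

lemma e_sum (N : ℕ) (k : Fin N) : ∑ i, e N k i = 1 := by
  simp [e]

lemma dotR_e {N : ℕ} (v : Fin N → ℝ) (k : Fin N) : dotR v (e N k) = v k := by
  unfold dotR e
  simp [Pi.single_apply]

lemma mulVec_e_s17 {N : ℕ} (A : Matrix (Fin N) (Fin N) ℝ) (k i : Fin N) :
    A.mulVec (e N k) i = A i k := by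
  simp [Matrix.mulVec, dotProduct, e, Pi.single_apply]

lemma dotR_sub' {N : ℕ} (v a b : Fin N → ℝ) :
    dotR v (fun i => a i - b i) = dotR v a - dotR v b := by
  unfold dotR
  rw [← Finset.sum_sub_distrib]
  exact Finset.sum_congr rfl fun i _ => by ring

/-- **Representation of `λ` via ergodic measures.** -/
theorem lambda_representation
    {Ω : Type*} {mΩ : MeasurableSpace Ω} {N : ℕ}
    (P : Measure Ω) [IsProbabilityMeasure P] (F : Filtration ℕ mΩ)
    (X : ℕ → Ω → (Fin N → ℝ)) (hX : BasisValued X)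
    (hF : IsCompletedNaturalFiltration P X F)
    (A : Matrix (Fin N) (Fin N) ℝ) (hA : IsMarkovChain P F X fun _ => A)
    (γ : ℝ) (hγ : γ ∈ Set.Ioo (0 : ℝ) 1)
    (f : (Fin N → ℝ) → (Fin N → ℝ) → ℝ)
    (hf : IsGammaBalancedNoY P F X (fun _ => A) γ fun ω t z => f (X t ω) z)
    -- `π` is the ergodic measure of `X` under `P`
    (π : Fin N → ℝ) (hπ : IsProbVec π)
    (hπerg : ∃ R ρ : ℝ, 0 < R ∧ 0 < ρ ∧ ∀ (t : ℕ) (μ : Fin N → ℝ), IsProbVec μ →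
      tvDist ((A ^ t).mulVec μ) π ≤ R * Real.exp (-ρ * t))
    -- the bounded stationary Markovian solution
    (v : Fin N → ℝ) (lam : ℝ)
    (hsol : SolvesEBSDE P F X f (fun t ω => dotR v (X t ω)) (fun _ _ => v) lam) :
    lam = ∑ k : Fin N, f (e N k) v * π k ∧
      ∃ πv : Fin N → ℝ, IsProbVec πv ∧ lam = ∑ k : Fin N, f (e N k) 0 * πv k := by
  classical
  obtain ⟨R, ρ, hR, hρ, herg⟩ := hπerg
  have hγ0 : 0 < γ := hγ.1
  -- measurability of X
  have hXmeas : ∀ t, Measurable (X t) := by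
    intro t s hs
    refine F.le t _ ?_
    rw [hF]
    refine ⟨X t ⁻¹' s, ?_, by simp⟩
    have hle : MeasurableSpace.comap (X t) inferInstance ≤ natSigma X t := by
      unfold natSigma
      exact le_iSup₂ (f := fun s _ => MeasurableSpace.comap (X s)
        (inferInstance : MeasurableSpace (Fin N → ℝ))) t (Set.mem_Iic.mpr le_rfl)
    exact hle _ ⟨s, hs, rfl⟩
  have hX01 : ∀ t ω i, X t ω i = 0 ∨ X t ω i = 1 := by
    intro t ω i
    obtain ⟨j, hj⟩ := hX t ω
    rw [hj]
    unfold e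
    rw [Pi.single_apply]
    split
    · right; rfl
    · left; rfl
  have hXsum : ∀ t ω, ∑ i, X t ω i = 1 := by
    intro t ω
    obtain ⟨j, hj⟩ := hX t ω
    rw [hj]
    simp [e]
  have hint : ∀ t i, Integrable (fun ω => X t ω i) P := by
    intro t i
    refine Integrable.mono' (integrable_const (1:ℝ))
      (((measurable_pi_apply i).comp (hXmeas t)).aestronglyMeasurable) ?_
    refine Filter.Eventually.of_forall fun ω => ?_
    rcases hX01 t ω i with h | h <;> simp [h]
  set μm : ℕ → Fin N → ℝ := fun t i => ∫ ω, X t ω i ∂P with hμm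
  have hμprob : ∀ t, IsProbVec (μm t) := by
    intro t
    constructor
    · intro i
      refine integral_nonneg fun ω => ?_
      rcases hX01 t ω i with h | h <;> simp [h]
    · have : ∑ i, μm t i = ∫ ω, ∑ i, X t ω i ∂P := by
        rw [integral_finset_sum _ (fun i _ => hint t i)]
      rw [this]
      simp [hXsum]
  have hrec : ∀ t, μm (t+1) = A.mulVec (μm t) := by
    intro t
    funext i
    have h1 : μm (t+1) i = ∫ ω, (P[(fun ω' => X (t+1) ω' i)|F t]) ω ∂P :=
      (integral_condExp (F.le t)).symm
    have h2 : ∫ ω, (P[(fun ω' => X (t+1) ω' i)|F t]) ω ∂P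
        = ∫ ω, A.mulVec (X t ω) i ∂P := integral_congr_ae (hA.2 t i)
    have h3 : ∫ ω, A.mulVec (X t ω) i ∂P = ∑ j, A i j * μm t j := by
      simp only [Matrix.mulVec, dotProduct]
      rw [integral_finset_sum _ (fun j _ => (hint t j).const_mul _)]
      exact Finset.sum_congr rfl fun j _ => integral_const_mul _ _
    rw [h1, h2, h3]
    rfl
  have hpow : ∀ t, μm t = (A ^ t).mulVec (μm 0) := by
    intro t
    induction t with
    | zero => simp [Matrix.one_mulVec]
    | succ n ih => rw [hrec n, ih, Matrix.mulVec_mulVec, ← pow_succ']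
  have htv : ∀ t : ℕ, ∑ j, |(A ^ t).mulVec π j - π j| ≤ 2 * (R * Real.exp (-ρ * t)) := by
    intro t
    have h := herg t π hπ
    unfold tvDist at h
    linarith
  have htvμ : ∀ t : ℕ, ∑ j, |μm t j - π j| ≤ 2 * (R * Real.exp (-ρ * t)) := by
    intro t
    have h := herg t (μm 0) (hμprob 0)
    rw [← hpow t] at h
    unfold tvDist at h
    linarith
  have htend : Filter.Tendsto (fun t : ℕ => R * Real.exp (-ρ * t)) Filter.atTop (nhds 0) := by
    have h1 : (fun t : ℕ => R * Real.exp (-ρ * t)) = fun t : ℕ => R * (Real.exp (-ρ)) ^ t := by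
      funext t
      rw [mul_comm (-ρ), Real.exp_nat_mul]
    rw [h1, show (0:ℝ) = R * 0 by ring]
    exact Filter.Tendsto.const_mul R (tendsto_pow_atTop_nhds_zero_of_lt_one
      (Real.exp_nonneg _) (Real.exp_lt_one_iff.mpr (by linarith)))
  have hA0 : ∀ i j, 0 ≤ A i j := (hA.1 0).1
  have hA1 : ∀ j, ∑ i, A i j = 1 := (hA.1 0).2
  have hAle1 : ∀ i j, A i j ≤ 1 := by
    intro i j
    calc A i j ≤ ∑ i', A i' j :=
          Finset.single_le_sum (fun i' _ => hA0 i' j) (Finset.mem_univ i)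
      _ = 1 := hA1 j
  have hAinv : A.mulVec π = π := by
    funext k
    have hbound : ∀ t : ℕ, |A.mulVec π k - π k| ≤ 4 * (R * Real.exp (-ρ * t)) := by
      intro t
      set w := (A ^ t).mulVec π with hw
      have e1 : A.mulVec w = (A ^ (t+1)).mulVec π := by
        rw [hw, Matrix.mulVec_mulVec, ← pow_succ']
      have b1 : |A.mulVec π k - A.mulVec w k| ≤ 2 * (R * Real.exp (-ρ * t)) := by
        have hh : A.mulVec π k - A.mulVec w k = ∑ j, A k j * (π j - w j) := by
          simp only [Matrix.mulVec, dotProduct, mul_sub]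
          rw [← Finset.sum_sub_distrib]
        rw [hh]
        calc |∑ j, A k j * (π j - w j)| ≤ ∑ j, |A k j * (π j - w j)| :=
              Finset.abs_sum_le_sum_abs _ _
          _ ≤ ∑ j, |w j - π j| := by
              refine Finset.sum_le_sum fun j _ => ?_
              rw [abs_mul, abs_of_nonneg (hA0 k j), abs_sub_comm]
              exact mul_le_of_le_one_left (abs_nonneg _) (hAle1 k j)
          _ ≤ 2 * (R * Real.exp (-ρ * t)) := htv t
      have b2 : |A.mulVec w k - π k| ≤ 2 * (R * Real.exp (-ρ * t)) := by
        rw [e1]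
        calc |(A ^ (t+1)).mulVec π k - π k| ≤ ∑ j, |(A ^ (t+1)).mulVec π j - π j| :=
              Finset.single_le_sum (f := fun j => |(A ^ (t+1)).mulVec π j - π j|)
                (fun j _ => abs_nonneg _) (Finset.mem_univ k)
          _ ≤ 2 * (R * Real.exp (-ρ * ((t:ℕ)+1 : ℕ))) := htv (t+1)
          _ ≤ 2 * (R * Real.exp (-ρ * t)) := by
              have hex : Real.exp (-ρ * ((t+1 : ℕ):ℝ)) ≤ Real.exp (-ρ * t) := by
                apply Real.exp_le_exp.mpr
                push_cast
                nlinarith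
              nlinarith
      calc |A.mulVec π k - π k|
          ≤ |A.mulVec π k - A.mulVec w k| + |A.mulVec w k - π k| := abs_sub_le _ _ _
        _ ≤ 4 * (R * Real.exp (-ρ * t)) := by linarith
    have hle0 : |A.mulVec π k - π k| ≤ 0 := by
      have h4 : Filter.Tendsto (fun t : ℕ => 4 * (R * Real.exp (-ρ * t)))
          Filter.atTop (nhds 0) := by
        rw [show (0:ℝ) = 4 * 0 by ring]
        exact htend.const_mul 4
      exact ge_of_tendsto h4 (Filter.Eventually.of_forall hbound)
    have h0 : A.mulVec π k - π k = 0 := abs_eq_zero.mp (le_antisymm hle0 (abs_nonneg _))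
    linarith
  have hAik : ∀ i, ∑ k, A i k * π k = π i := by
    intro i
    have h := congrFun hAinv i
    simpa [Matrix.mulVec, dotProduct] using h
  -- reachability
  have hreach : ∀ k, 0 < π k → ∃ t, 0 < P {ω | X t ω = e N k} := by
    intro k hk
    obtain ⟨t, ht⟩ := (htend.eventually (gt_mem_nhds (show (0:ℝ) < π k / 2 by linarith))).exists
    refine ⟨t, ?_⟩
    by_contra h
    push_neg at h
    have hz : P {ω | X t ω = e N k} = 0 := le_antisymm (le_of_not_gt (fun hc => absurd hc (not_lt.mpr h))) zero_le
    have hae : ∀ᵐ ω ∂P, ¬ (X t ω = e N k) := by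
      rw [ae_iff]
      simpa using hz
    have hμ0 : μm t k = 0 := by
      have hz2 : (fun ω => X t ω k) =ᵐ[P] (fun _ => (0:ℝ)) := by
        filter_upwards [hae] with ω hω
        obtain ⟨j, hj⟩ := hX t ω
        have hjk : j ≠ k := fun hjk => hω (by rw [hj, hjk])
        rw [hj]
        simp [e, Pi.single_apply, hjk]
      calc μm t k = ∫ ω, (0:ℝ) ∂P := integral_congr_ae hz2
        _ = 0 := integral_zero _ _
    have h1 : |μm t k - π k| ≤ 2 * (R * Real.exp (-ρ * t)) :=
      le_trans (Finset.single_le_sum (f := fun j => |μm t j - π j|)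
        (fun j _ => abs_nonneg _) (Finset.mem_univ k)) (htvμ t)
    have h2 := (abs_le.mp h1).1
    rw [hμ0] at h2
    linarith
  -- the pointwise EBSDE identity
  have hkey : ∀ t, ∀ᵐ ω ∂P,
      f (X t ω) v = lam + dotR v (X t ω) - dotR v (A.mulVec (X t ω)) := by
    intro t
    have h1 := hsol t (t+1) (Nat.lt_succ_self t)
    have h2 : ∀ᵐ ω ∂P, ∀ i, (P[(fun ω' => X (t+1) ω' i)|F t]) ω = A.mulVec (X t ω) i :=
      ae_all_iff.mpr (hA.2 t)
    filter_upwards [h1, h2] with ω h1 h2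
    rw [Nat.Ico_succ_singleton] at h1
    simp only [Finset.sum_singleton] at h1
    have h3 : dotR v (Mdiff P F X t ω) = dotR v (X (t+1) ω) - dotR v (A.mulVec (X t ω)) := by
      unfold dotR Mdiff
      rw [← Finset.sum_sub_distrib]
      refine Finset.sum_congr rfl fun i _ => ?_
      rw [h2 i]
      ring
    rw [h3] at h1
    linarith
  obtain ⟨ψ, hψmeas, hψ⟩ := hf
  -- state-wise identities on the support of π
  have hstate : ∀ k, 0 < π k →
      f (e N k) v = lam + v k - dotR v (A.mulVec (e N k)) ∧
      ∃ ψk : Fin N → ℝ, f (e N k) 0 = lam + v k - dotR v ψk ∧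
        (∀ i, 0 ≤ ψk i) ∧ (∀ i, ψk i ≠ 0 → A i k ≠ 0) ∧ ∑ i, ψk i = 1 := by
    intro k hk
    obtain ⟨t, ht⟩ := hreach k hk
    obtain ⟨ω, hω, hQ1, hQ2, hQ3, hQ4⟩ :=
      exists_mem_of_pos_of_ae ht ((hkey t).and (hψ t v 0))
    simp only [Set.mem_setOf_eq] at hω
    beta_reduce at hQ2 hQ3
    rw [hω] at hQ1 hQ2 hQ3
    rw [dotR_e] at hQ1
    have hQ2' : f (e N k) v - f (e N k) 0 = dotR v (ψ ω t v 0) - dotR v (A.mulVec (e N k)) := by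
      rw [sub_zero] at hQ2
      rw [hQ2, dotR_sub']
    refine ⟨hQ1, ψ ω t v 0, by linarith, ?_, ?_, hQ4⟩
    · intro i
      have h := Set.mem_Icc.mp (hQ3 i)
      rw [mulVec_e_s17] at h
      rcases eq_or_ne (A i k) 0 with hz | hz
      · rcases eq_or_ne (ψ ω t v 0 i) 0 with hz2 | hz2
        · exact le_of_eq hz2.symm
        · exfalso
          have hbr : balRatio (ψ ω t v 0 i) (A i k) = 0 := by
            unfold balRatio
            rw [hz]
            simp [hz2]
          rw [hbr] at h
          linarith [h.1]
      · have hpos : 0 < A i k := lt_of_le_of_ne (hA0 i k) (Ne.symm hz)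
        have hbr : balRatio (ψ ω t v 0 i) (A i k) = ψ ω t v 0 i / A i k := by
          unfold balRatio
          simp [hz]
        rw [hbr] at h
        have h5 : γ * A i k ≤ ψ ω t v 0 i := by
          have := h.1
          rw [le_div_iff₀ hpos] at this
          linarith
        nlinarith
    · intro i hi
      have h := Set.mem_Icc.mp (hQ3 i)
      rw [mulVec_e_s17] at h
      intro hz
      have hbr : balRatio (ψ ω t v 0 i) (A i k) = 0 := by
        unfold balRatio
        rw [hz]
        simp [hi]
      rw [hbr] at h
      linarith [h.1]
  -- Part 1
  have hmulVec_dot : ∀ k, dotR v (A.mulVec (e N k)) = ∑ i, v i * A i k := by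
    intro k
    unfold dotR
    exact Finset.sum_congr rfl fun i _ => by rw [mulVec_e_s17]
  have hpart1 : lam = ∑ k, f (e N k) v * π k := by
    symm
    have hterm : ∀ k, f (e N k) v * π k = (lam + v k - dotR v (A.mulVec (e N k))) * π k := by
      intro k
      rcases (hπ.1 k).lt_or_eq with hk | hk
      · rw [(hstate k hk).1]
      · rw [← hk]
        ring
    rw [Finset.sum_congr rfl fun k _ => hterm k]
    have h5 : ∀ i, ∑ k, v i * A i k * π k = v i * π i := by
      intro i
      calc ∑ k, v i * A i k * π k = v i * ∑ k, A i k * π k := by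
            rw [Finset.mul_sum]
            exact Finset.sum_congr rfl fun k _ => by ring
        _ = v i * π i := by rw [hAik]
    calc ∑ k, (lam + v k - dotR v (A.mulVec (e N k))) * π k
        = ∑ k, (lam * π k + v k * π k - ∑ i, v i * A i k * π k) := by
          refine Finset.sum_congr rfl fun k _ => ?_
          rw [hmulVec_dot, sub_mul, Finset.sum_mul]
          ring
      _ = lam * ∑ k, π k + ∑ k, v k * π k - ∑ k, ∑ i, v i * A i k * π k := by
          rw [Finset.sum_sub_distrib, Finset.sum_add_distrib, Finset.mul_sum]
      _ = lam := by
          rw [hπ.2, mul_one, Finset.sum_comm, Finset.sum_congr rfl fun i _ => h5 i]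
          ring
  -- Part 2: choose the tilted columns
  have hqex : ∀ k, ∃ qk : Fin N → ℝ,
      (0 < π k → f (e N k) 0 = lam + v k - dotR v qk ∧ ∀ i, qk i ≠ 0 → 0 < π i) ∧
      (∀ i, 0 ≤ qk i) ∧ ∑ i, qk i = 1 := by
    intro k
    by_cases hk : 0 < π k
    · obtain ⟨-, ψk, h1, h2, h3, h4⟩ := hstate k hk
      refine ⟨ψk, fun _ => ⟨h1, fun i hi => ?_⟩, h2, h4⟩
      have hz : A i k ≠ 0 := h3 i hi
      have hpos : 0 < A i k * π k := mul_pos (lt_of_le_of_ne (hA0 i k) (Ne.symm hz)) hk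
      have hsum : A i k * π k ≤ ∑ j, A i j * π j :=
        Finset.single_le_sum (f := fun j => A i j * π j)
          (fun j _ => mul_nonneg (hA0 i j) (hπ.1 j)) (Finset.mem_univ k)
      have := hAik i
      linarith
    · exact ⟨e N k, fun h => absurd h hk, e_nonneg N k, e_sum N k⟩
  choose q hq1 hq2 hq3 using hqex
  set T : (Fin N → ℝ) → (Fin N → ℝ) := fun μ i => ∑ k, q k i * μ k with hT
  set μs : ℕ → Fin N → ℝ := fun n => T^[n] π with hμs
  have hμs0 : μs 0 = π := rfl
  have hμssucc : ∀ n, μs (n+1) = T (μs n) := fun n => Function.iterate_succ_apply' T n π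
  have hPred : ∀ n, (∀ i, 0 ≤ μs n i) ∧ (∑ i, μs n i = 1) ∧ (∀ k, μs n k ≠ 0 → 0 < π k) := by
    intro n
    induction n with
    | zero => exact ⟨hπ.1, hπ.2, fun k hk => lt_of_le_of_ne (hπ.1 k) (Ne.symm hk)⟩
    | succ n ih =>
      obtain ⟨ih1, ih2, ih3⟩ := ih
      rw [hμssucc]
      have hTval : ∀ i, T (μs n) i = ∑ k, q k i * μs n k := fun i => rfl
      refine ⟨fun i => ?_, ?_, ?_⟩
      · rw [hTval]
        exact Finset.sum_nonneg fun k _ => mul_nonneg (hq2 k i) (ih1 k)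
      · calc ∑ i, T (μs n) i = ∑ i, ∑ k, q k i * μs n k :=
              Finset.sum_congr rfl fun i _ => hTval i
          _ = ∑ k, ∑ i, q k i * μs n k := Finset.sum_comm
          _ = ∑ k, μs n k := by
              refine Finset.sum_congr rfl fun k _ => ?_
              rw [← Finset.sum_mul, hq3, one_mul]
          _ = 1 := ih2
      · intro i hi
        rw [hTval] at hi
        obtain ⟨k, -, hk⟩ := Finset.exists_ne_zero_of_sum_ne_zero hi
        have hμk : μs n k ≠ 0 := fun h => hk (by rw [h, mul_zero])
        have hqki : q k i ≠ 0 := fun h => hk (by rw [h, zero_mul])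
        exact (hq1 k (ih3 k hμk)).2 i hqki
  have hstep : ∀ n, ∑ k, f (e N k) 0 * μs n k = lam + dotR v (μs n) - dotR v (μs (n+1)) := by
    intro n
    obtain ⟨h1, h2, h3⟩ := hPred n
    have hterm : ∀ k, f (e N k) 0 * μs n k = (lam + v k - dotR v (q k)) * μs n k := by
      intro k
      rcases eq_or_ne (μs n k) 0 with hz | hz
      · rw [hz]
        ring
      · rw [(hq1 k (h3 k hz)).1]
    rw [Finset.sum_congr rfl fun k _ => hterm k]
    have hdT : dotR v (μs (n+1)) = ∑ k, dotR v (q k) * μs n k := by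
      rw [hμssucc]
      unfold dotR
      have hTval : ∀ i, T (μs n) i = ∑ k, q k i * μs n k := fun i => rfl
      calc ∑ i, v i * T (μs n) i = ∑ i, ∑ k, v i * q k i * μs n k := by
            refine Finset.sum_congr rfl fun i _ => ?_
            rw [hTval, Finset.mul_sum]
            exact Finset.sum_congr rfl fun k _ => by ring
        _ = ∑ k, ∑ i, v i * q k i * μs n k := Finset.sum_comm
        _ = ∑ k, (∑ i, v i * q k i) * μs n k := by
            refine Finset.sum_congr rfl fun k _ => ?_
            rw [Finset.sum_mul]
    have hexp : ∀ k, (lam + v k - dotR v (q k)) * μs n k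
        = lam * μs n k + v k * μs n k - dotR v (q k) * μs n k := fun k => by ring
    rw [Finset.sum_congr rfl fun k _ => hexp k, Finset.sum_sub_distrib,
      Finset.sum_add_distrib, ← Finset.mul_sum, h2, mul_one, hdT]
    unfold dotR
    ring
  have hW : ∀ (μ : Fin N → ℝ), (∀ i, 0 ≤ μ i) → (∑ i, μ i = 1) →
      |dotR v μ| ≤ ∑ i, |v i| := by
    intro μ h1 h2
    calc |dotR v μ| ≤ ∑ i, |v i * μ i| := Finset.abs_sum_le_sum_abs _ _
      _ ≤ ∑ i, |v i| := by
          refine Finset.sum_le_sum fun i _ => ?_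
          rw [abs_mul, abs_of_nonneg (h1 i)]
          have hle : μ i ≤ 1 := by
            have := Finset.single_le_sum (fun j _ => h1 j) (Finset.mem_univ i)
            linarith
          nlinarith [abs_nonneg (v i)]
  set V := ∑ i, |v i| with hV
  have hVpos : 0 ≤ V := Finset.sum_nonneg fun i _ => abs_nonneg _
  -- N is positive
  have hΩ : Nonempty Ω := by
    by_contra hΩ
    have hu : (Set.univ : Set Ω) = ∅ := Set.univ_eq_empty_iff.mpr (not_nonempty_iff.mp hΩ)
    have h1 : P Set.univ = 1 := measure_univ
    rw [hu, measure_empty] at h1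
    exact zero_ne_one h1
  haveI : Nonempty (Fin N) := by
    obtain ⟨ω⟩ := hΩ
    obtain ⟨i, -⟩ := hX 0 ω
    exact ⟨i⟩
  obtain ⟨k₀, -, hk₀⟩ := Finset.exists_min_image Finset.univ (fun k => f (e N k) 0)
    ⟨Classical.arbitrary _, Finset.mem_univ _⟩
  obtain ⟨k₁, -, hk₁⟩ := Finset.exists_max_image Finset.univ (fun k => f (e N k) 0)
    ⟨Classical.arbitrary _, Finset.mem_univ _⟩
  set m := f (e N k₀) 0 with hm
  set M := f (e N k₁) 0 with hM
  have hsum_tel : ∀ n₀ : ℕ, ∑ n ∈ Finset.range n₀, (∑ k, f (e N k) 0 * μs n k)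
      = n₀ * lam + (dotR v (μs 0) - dotR v (μs n₀)) := by
    intro n₀
    rw [Finset.sum_congr rfl fun n _ => hstep n]
    have hh : ∀ n, lam + dotR v (μs n) - dotR v (μs (n+1))
        = lam + (dotR v (μs n) - dotR v (μs (n+1))) := fun n => by ring
    rw [Finset.sum_congr rfl fun n _ => hh n, Finset.sum_add_distrib, Finset.sum_const,
      Finset.sum_range_sub' (fun n => dotR v (μs n))]
    simp [nsmul_eq_mul]
  have hdiffbd : ∀ n₀ : ℕ, |dotR v (μs 0) - dotR v (μs n₀)| ≤ 2 * V := by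
    intro n₀
    have b1 := hW (μs 0) (hPred 0).1 (hPred 0).2.1
    have b2 := hW (μs n₀) (hPred n₀).1 (hPred n₀).2.1
    have := abs_le.mp b1
    have := abs_le.mp b2
    rw [abs_le]
    constructor <;> linarith [(abs_le.mp b1).1, (abs_le.mp b1).2, (abs_le.mp b2).1, (abs_le.mp b2).2]
  have hlow : ∀ n₀ : ℕ, (n₀ : ℝ) * m ≤ n₀ * lam + 2 * V := by
    intro n₀
    have h1 : (n₀ : ℝ) * m ≤ ∑ n ∈ Finset.range n₀, (∑ k, f (e N k) 0 * μs n k) := by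
      rw [show (n₀:ℝ) * m = ∑ _n ∈ Finset.range n₀, m by rw [Finset.sum_const]; simp [nsmul_eq_mul]]
      refine Finset.sum_le_sum fun n _ => ?_
      obtain ⟨p1, p2, -⟩ := hPred n
      calc m = ∑ k, m * μs n k := by rw [← Finset.mul_sum, p2, mul_one]
        _ ≤ ∑ k, f (e N k) 0 * μs n k :=
            Finset.sum_le_sum fun k _ =>
              mul_le_mul_of_nonneg_right (hk₀ k (Finset.mem_univ k)) (p1 k)
    rw [hsum_tel n₀] at h1
    have h2 := (abs_le.mp (hdiffbd n₀)).2
    linarith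
  have hhigh : ∀ n₀ : ℕ, (n₀ : ℝ) * lam ≤ n₀ * M + 2 * V := by
    intro n₀
    have h1 : ∑ n ∈ Finset.range n₀, (∑ k, f (e N k) 0 * μs n k) ≤ (n₀ : ℝ) * M := by
      rw [show (n₀:ℝ) * M = ∑ _n ∈ Finset.range n₀, M by rw [Finset.sum_const]; simp [nsmul_eq_mul]]
      refine Finset.sum_le_sum fun n _ => ?_
      obtain ⟨p1, p2, -⟩ := hPred n
      calc ∑ k, f (e N k) 0 * μs n k ≤ ∑ k, M * μs n k :=
            Finset.sum_le_sum fun k _ =>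
              mul_le_mul_of_nonneg_right (hk₁ k (Finset.mem_univ k)) (p1 k)
        _ = M := by rw [← Finset.mul_sum, p2, mul_one]
    rw [hsum_tel n₀] at h1
    have h2 := (abs_le.mp (hdiffbd n₀)).1
    linarith
  have hmlam : m ≤ lam := by
    by_contra h
    push_neg at h
    obtain ⟨n, hn⟩ := exists_nat_gt ((2 * V) / (m - lam))
    have hml : 0 < m - lam := by linarith
    have h1 := hlow n
    rw [div_lt_iff₀ hml] at hn
    nlinarith
  have hlamM : lam ≤ M := by
    by_contra h
    push_neg at h
    obtain ⟨n, hn⟩ := exists_nat_gt ((2 * V) / (lam - M))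
    have hml : 0 < lam - M := by linarith
    have h1 := hhigh n
    rw [div_lt_iff₀ hml] at hn
    nlinarith
  refine ⟨hpart1, ?_⟩
  by_cases hmM : M ≤ m
  · have hlm : lam = m := le_antisymm (le_trans hlamM hmM) hmlam
    refine ⟨fun k => if k = k₀ then 1 else 0, ⟨fun i => by positivity, by simp⟩, ?_⟩
    rw [hlm, hm]
    simp [mul_ite]
  · push_neg at hmM
    set c := (M - lam) / (M - m) with hc
    have hMm : (0:ℝ) < M - m := by linarith
    have hc0 : 0 ≤ c := div_nonneg (by linarith) (by linarith)
    have hc1 : c ≤ 1 := by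
      rw [hc, div_le_one hMm]
      linarith
    refine ⟨fun k => c * (if k = k₀ then 1 else 0) + (1 - c) * (if k = k₁ then 1 else 0),
      ⟨fun i => add_nonneg (mul_nonneg hc0 (by split <;> norm_num))
        (mul_nonneg (by linarith) (by split <;> norm_num)), ?_⟩, ?_⟩
    · rw [Finset.sum_add_distrib, ← Finset.mul_sum, ← Finset.mul_sum,
        Finset.sum_ite_eq', Finset.sum_ite_eq']
      simp
    · have hval : ∑ k, f (e N k) 0 *
          (c * (if k = k₀ then 1 else 0) + (1 - c) * (if k = k₁ then 1 else 0))
          = c * m + (1 - c) * M := by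
        have hterm : ∀ k, f (e N k) 0 *
            (c * (if k = k₀ then 1 else 0) + (1 - c) * (if k = k₁ then 1 else 0))
            = c * (if k = k₀ then f (e N k) 0 else 0)
              + (1 - c) * (if k = k₁ then f (e N k) 0 else 0) := by
          intro k
          split_ifs <;> ring
        rw [Finset.sum_congr rfl fun k _ => hterm k, Finset.sum_add_distrib,
          ← Finset.mul_sum, ← Finset.mul_sum, Finset.sum_ite_eq', Finset.sum_ite_eq']
        simp [hm, hM]
      rw [hval, hc]
      field_simp
      ring
end DiscreteEBSDE
end
end
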